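/- arXiv:1504.01872 — 7 statements merged into one kernel-verified Lean document; each statement's English description precedes it below -/
import Mathlib

section
/- Let t ∈ [0,T], ω ∈ Ω, and let E be a metric space equipped with its Borel σ-algebra. If X : [0,T] × Ω → E is progressively measurable with respect to the canonical filtration (ℱ_u)_{u∈[0,T]} (i.e. for every u ∈ [0,T], (r,ω') ↦ X(r,ω') restricted to [0,u] × Ω is measurable for the product of the Borel σ-algebra on [0,u] and ℱ_u), then the shifted process X^{t,ω} : [0,T−t] × Ω → E defined by X^{t,ω}_r(ω') := X(t+r, ω ⊗_t ω') is progressively measurable with respect to (ℱ_u)_{u∈[0,T−t]}. -/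
open MeasureTheory

noncomputable section

/-- The path space `Ω`: continuous paths `ℝ → ℝ^d` starting from the origin
(only their restriction to `[0,T]` is relevant). -/
abbrev PathR (d : ℕ) := {ω : ℝ → EuclideanSpace ℝ (Fin d) // Continuous ω ∧ ω 0 = 0}

/-- The canonical filtration: `ℱ_u` is generated by the coordinate maps `ω ↦ ω_s`, `s ∈ [0,u]`. -/
def filtr (d : ℕ) (u : ℝ) : MeasurableSpace (PathR d) :=
  ⨆ s ∈ Set.Icc (0 : ℝ) u,
    MeasurableSpace.comap (fun ω : PathR d => ω.1 s) inferInstance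

/-- The concatenated path `ω ⊗_t ω'`: equals `ω` on `[0,t]` and `ω_t + ω'_{s−t}` for `s > t`. -/
def concat (d : ℕ) (t : ℝ) (ht : 0 ≤ t) (ω ω' : PathR d) : PathR d :=
  ⟨fun s => ω.1 (min s t) + ω'.1 (max (s - t) 0),
   ⟨(ω.2.1.comp (continuous_id.min continuous_const)).add
      (ω'.2.1.comp ((continuous_id.sub continuous_const).max continuous_const)),
    by
      have h1 : max ((0 : ℝ) - t) 0 = 0 := max_eq_right (by linarith)
      have h2 : min (0 : ℝ) t = 0 := min_eq_left ht
      simp only [h2, h1, ω.2.2, ω'.2.2, add_zero]⟩⟩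

/-- if `X : [0,T] × Ω → E` (E a metric space with its Borel σ-algebra)
is progressively measurable for the canonical filtration, then for `0 ≤ t ≤ T` and
`ω ∈ Ω` the shifted process `X^{t,ω} : (r,ω') ↦ X(t+r, ω ⊗_t ω')` is progressively
measurable on `[0, T−t]`. -/
theorem stmt_2 (T : ℝ) (hT : 0 < T) (d : ℕ) (hd : 1 ≤ d)
    (t : ℝ) (ht : 0 ≤ t) (htT : t ≤ T) (ω : PathR d)
    {E : Type*} [MetricSpace E] [MeasurableSpace E] [BorelSpace E]
    (X : ℝ → PathR d → E)
    (hX : ∀ u, 0 ≤ u → u ≤ T →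
      @Measurable (Set.Icc (0 : ℝ) u × PathR d) E
        (MeasurableSpace.prod inferInstance (filtr d u)) _
        fun p => X p.1 p.2) :
    ∀ u, 0 ≤ u → u ≤ T - t →
      @Measurable (Set.Icc (0 : ℝ) u × PathR d) E
        (MeasurableSpace.prod inferInstance (filtr d u)) _
        fun p => X (t + p.1) (concat d t ht ω p.2) := by

  intro u hu huT
  -- coordinate maps are measurable w.r.t. `filtr d u`
  have hcoord : ∀ r : ℝ, r ∈ Set.Icc (0:ℝ) u →
      @Measurable (PathR d) _ (filtr d u) _ (fun ω' : PathR d => ω'.1 r) := by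
    intro r hr
    rw [measurable_iff_comap_le]
    exact le_iSup₂ (f := fun s _ =>
      MeasurableSpace.comap (fun ω : PathR d => ω.1 s) inferInstance) r hr
  -- concatenation is measurable from `filtr d u` to `filtr d (t+u)`
  have hconcat : @Measurable (PathR d) (PathR d) (filtr d u) (filtr d (t+u))
      (fun ω' => concat d t ht ω ω') := by
    rw [measurable_iff_comap_le, filtr, MeasurableSpace.comap_iSup]
    refine iSup_le fun s => ?_
    rw [MeasurableSpace.comap_iSup]
    refine iSup_le fun hs => ?_
    rw [MeasurableSpace.comap_comp, ← measurable_iff_comap_le]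
    show @Measurable (PathR d) _ (filtr d u) _
      (fun ω' : PathR d => ω.1 (min s t) + ω'.1 (max (s - t) 0))
    have hr : max (s - t) 0 ∈ Set.Icc (0:ℝ) u := by
      constructor
      · exact le_max_right _ _
      · refine max_le ?_ hu
        have := hs.2
        linarith
    exact (@measurable_const _ _ _ (filtr d u) _).add (hcoord _ hr)
  have hφ : @Measurable (Set.Icc (0:ℝ) u × PathR d) (Set.Icc (0:ℝ) (t+u) × PathR d)
      (MeasurableSpace.prod inferInstance (filtr d u))
      (MeasurableSpace.prod inferInstance (filtr d (t+u)))
      (fun p => (⟨t + p.1.1, ⟨by have := p.1.2.1; simp; linarith, by have := p.1.2.2; simp; linarith⟩⟩,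
        concat d t ht ω p.2)) := by
    refine Measurable.prod ?_ ?_
    · refine Measurable.subtype_mk ?_
      exact (measurable_const.add (measurable_subtype_coe.comp
        (@measurable_fst _ _ _ (filtr d u))))
    · exact hconcat.comp (@measurable_snd _ _ _ (filtr d u))
  have := (hX (t + u) (by linarith) (by linarith)).comp hφ
  exact this
end
end

section
/- Let t ∈ [0,T], ω ∈ Ω and s ∈ [t,T]. If τ : Ω → [0,T] is a stopping time of the canonical filtration (i.e. {ω'' : τ(ω'') ≤ u} ∈ ℱ_u for every u ∈ [0,T]) taking values in [t,s], then the map ω' ↦ τ(ω ⊗_t ω') − t is a stopping time of the canonical filtration (ℱ_u) taking values in [0, s−t]. -/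
open MeasureTheory

noncomputable section

/-- if `τ` is a stopping time of the canonical filtration taking values
in `[t,s]` (with `0 ≤ t ≤ s ≤ T`), then `ω' ↦ τ(ω ⊗_t ω') − t` is a stopping time of
the canonical filtration taking values in `[0, s−t]`. -/
theorem stmt_3 (T : ℝ) (hT : 0 < T) (d : ℕ) (hd : 1 ≤ d)
    (t s : ℝ) (ht : 0 ≤ t) (hts : t ≤ s) (hsT : s ≤ T) (ω : PathR d)
    (τ : PathR d → ℝ)
    (hτ_stop : ∀ u ∈ Set.Icc (0 : ℝ) T, MeasurableSet[filtr d u] {ω'' : PathR d | τ ω'' ≤ u})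
    (hτ_range : ∀ ω'' : PathR d, τ ω'' ∈ Set.Icc t s) :
    (∀ ω' : PathR d, τ (concat d t ht ω ω') - t ∈ Set.Icc 0 (s - t)) ∧
    (∀ u ∈ Set.Icc (0 : ℝ) T,
      MeasurableSet[filtr d u] {ω' : PathR d | τ (concat d t ht ω ω') - t ≤ u}) := by
  constructor
  · intro ω'
    have h := hτ_range (concat d t ht ω ω')
    exact ⟨by linarith [h.1], by linarith [h.2]⟩
  · intro u hu
    by_cases htu : t + u ≤ T
    · -- the set is the preimage of {τ ≤ t + u} under concatenation
      have hset : {ω' : PathR d | τ (concat d t ht ω ω') - t ≤ u}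
          = (fun ω' => concat d t ht ω ω') ⁻¹' {ω'' : PathR d | τ ω'' ≤ t + u} := by
        ext ω'; simp only [Set.mem_setOf_eq, Set.mem_preimage]; constructor <;> intro h <;> linarith
      rw [hset]
      have hA : MeasurableSet[filtr d (t + u)] {ω'' : PathR d | τ ω'' ≤ t + u} :=
        hτ_stop (t + u) ⟨by linarith [hu.1], htu⟩
      -- comap of the target filtration along concatenation is below filtr d u
      have hle : MeasurableSpace.comap (fun ω' => concat d t ht ω ω') (filtr d (t + u))
          ≤ filtr d u := by
        rw [filtr, MeasurableSpace.comap_iSup]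
        refine iSup_le fun r => ?_
        rw [MeasurableSpace.comap_iSup]
        refine iSup_le fun hr => ?_
        rw [MeasurableSpace.comap_comp]
        have hcoord : (fun ω'' : PathR d => ω''.1 r) ∘ (fun ω' => concat d t ht ω ω')
            = (fun x => ω.1 (min r t) + x) ∘ (fun ω' : PathR d => ω'.1 (max (r - t) 0)) := by
          funext ω'; rfl
        rw [hcoord, ← MeasurableSpace.comap_comp]
        have hg : Measurable (fun x : EuclideanSpace ℝ (Fin d) => ω.1 (min r t) + x) :=
          measurable_const.add measurable_id
        have h1 : MeasurableSpace.comap (fun x : EuclideanSpace ℝ (Fin d) =>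
            ω.1 (min r t) + x) inferInstance ≤ (inferInstance : MeasurableSpace (EuclideanSpace ℝ (Fin d))) := hg.comap_le
        calc MeasurableSpace.comap (fun ω' : PathR d => ω'.1 (max (r - t) 0))
              (MeasurableSpace.comap (fun x => ω.1 (min r t) + x) inferInstance)
            ≤ MeasurableSpace.comap (fun ω' : PathR d => ω'.1 (max (r - t) 0))
              inferInstance := MeasurableSpace.comap_mono h1
          _ ≤ filtr d u :=
              le_iSup₂ (f := fun (s' : ℝ) (_ : s' ∈ Set.Icc (0:ℝ) u) =>
                  MeasurableSpace.comap (fun ω' : PathR d => ω'.1 s') inferInstance)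
                (max (r - t) 0) ⟨le_max_right _ _, max_le (by linarith [hr.2]) hu.1⟩
      exact hle _ (MeasurableSpace.measurableSet_comap.mpr ⟨_, hA, rfl⟩)
    · -- t + u > T: the set is everything
      have hset : {ω' : PathR d | τ (concat d t ht ω ω') - t ≤ u} = Set.univ := by
        ext ω'
        have h := hτ_range (concat d t ht ω ω')
        simp only [Set.mem_setOf_eq, Set.mem_univ, iff_true]
        linarith [h.2]
      rw [hset]
      exact MeasurableSet.univ
end
end

section
/- Let (Ω̃, 𝒢, P) be a probability space, 𝒢₀ ⊆ 𝒢₁ ⊆ … ⊆ 𝒢_n ⊆ 𝒢 a discrete filtration, and X₀, X₁, …, X_n a real-valued, square-integrable process adapted to (𝒢_i) with X₀ = 0. Suppose there is a constant K ≥ 0 such that for every 0 ≤ i < n, almost surely |E[X_{i+1} − X_i | 𝒢_i]| ≤ K and E[ (X_{i+1} − X_i − E[X_{i+1} − X_i | 𝒢_i])² | 𝒢_i ] ≤ K. Then E[ max_{0≤k≤n} |X_k| ] ≤ nK + 2√(nK). -/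
open MeasureTheory

open scoped ENNReal NNReal

namespace Stmt10Aux

variable {Ω : Type*} [MeasurableSpace Ω] {P : Measure Ω}

lemma integrable_sup'' {ι : Type*} (s : Finset ι) (hs : s.Nonempty) (f : ι → Ω → ℝ)
    (hf : ∀ i ∈ s, Integrable (f i) P) :
    Integrable (fun ω => s.sup' hs fun i => f i ω) P := by
  induction hs using Finset.Nonempty.cons_induction with
  | singleton a => simpa using hf a (by simp)
  | cons a s ha hs ih =>
    simp only [Finset.sup'_cons hs]
    exact (hf a (by simp)).sup (ih fun i hi => hf i (Finset.mem_cons_of_mem hi))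

lemma integrable_mul2 {f g : Ω → ℝ} (hf : MemLp f 2 P) (hg : MemLp g 2 P) :
    Integrable (fun ω => f ω * g ω) P := by
  refine Integrable.mono' (g := fun ω => f ω ^ 2 + g ω ^ 2) ?_
    (hf.aestronglyMeasurable.mul hg.aestronglyMeasurable) ?_
  · exact hf.integrable_sq.add hg.integrable_sq
  · filter_upwards with ω
    rw [Real.norm_eq_abs]
    refine abs_le.2 ⟨by nlinarith [sq_nonneg (f ω + g ω)], by nlinarith [sq_nonneg (f ω - g ω)]⟩

lemma rpow_neg_two {t : ℝ} (ht : 0 < t) : t ^ (-2:ℝ) = (t^2)⁻¹ := by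
  rw [show (-2:ℝ) = ((-2:ℤ):ℝ) by norm_num, Real.rpow_intCast, zpow_neg, zpow_two, pow_two]

lemma tail_integral_le (g : ℝ → ℝ) (hanti : Antitone g) (h0 : ∀ t, 0 ≤ g t)
    (h1 : ∀ t, g t ≤ 1) {V c : ℝ} (hV : 0 ≤ V) (hc : 0 < c)
    (hbound : ∀ t, c < t → g t ≤ V / t^2) :
    ∫ t in Set.Ioi (0:ℝ), g t ≤ c + V / c := by
  have hmeas : Measurable g := hanti.measurable
  have hIoc : IntegrableOn g (Set.Ioc 0 c) := by
    refine Integrable.mono' (g := fun _ => (1:ℝ))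
      (integrableOn_const measure_Ioc_lt_top.ne) hmeas.aestronglyMeasurable ?_
    filter_upwards with t
    rw [Real.norm_eq_abs, abs_of_nonneg (h0 t)]
    exact h1 t
  have hrint : IntegrableOn (fun t : ℝ => V * t ^ (-2:ℝ)) (Set.Ioi c) :=
    (integrableOn_Ioi_rpow_of_lt (by norm_num) hc).const_mul V
  have hIoi : IntegrableOn g (Set.Ioi c) := by
    refine Integrable.mono' hrint hmeas.aestronglyMeasurable ?_
    rw [ae_restrict_iff' measurableSet_Ioi]
    filter_upwards with t ht
    rw [Real.norm_eq_abs, abs_of_nonneg (h0 t), rpow_neg_two (hc.trans ht), ← div_eq_mul_inv]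
    exact hbound t ht
  have hsplit : ∫ t in Set.Ioi (0:ℝ), g t
      = (∫ t in Set.Ioc 0 c, g t) + ∫ t in Set.Ioi c, g t := by
    rw [← setIntegral_union (Set.Ioc_disjoint_Ioi le_rfl) measurableSet_Ioi hIoc hIoi,
      Set.Ioc_union_Ioi_eq_Ioi hc.le]
  have hb1 : ∫ t in Set.Ioc 0 c, g t ≤ c := by
    have h' : ∫ t in Set.Ioc 0 c, g t ≤ ∫ _ in Set.Ioc 0 c, (1:ℝ) :=
      setIntegral_mono_on hIoc (integrableOn_const measure_Ioc_lt_top.ne)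
        measurableSet_Ioc fun t _ => h1 t
    have h'' : ∫ _ in Set.Ioc 0 c, (1:ℝ) = c := by
      simp [Real.volume_Ioc, ENNReal.toReal_ofReal hc.le, hc.le]
    linarith
  have hb2 : ∫ t in Set.Ioi c, g t ≤ V / c := by
    have h' : ∫ t in Set.Ioi c, g t ≤ ∫ t in Set.Ioi c, V * t ^ (-2:ℝ) := by
      refine setIntegral_mono_on hIoi hrint measurableSet_Ioi fun t ht => ?_
      rw [rpow_neg_two (hc.trans ht), ← div_eq_mul_inv]
      exact hbound t ht
    have h'' : ∫ t in Set.Ioi c, V * t ^ (-2:ℝ) = V / c := by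
      rw [integral_const_mul, integral_Ioi_rpow_of_lt (by norm_num) hc]
      norm_num [Real.rpow_neg_one, div_eq_mul_inv]
    linarith
  rw [hsplit]
  exact add_le_add hb1 hb2

end Stmt10Aux

/-- a discrete-time maximal estimate: if `X₀ = 0`, the process is
square-integrable and adapted to `(𝒢 i)`, the conditional drift of each increment is
bounded by `K` and the conditional variance of each increment is bounded by `K`, then
`E[max_{0 ≤ k ≤ n} |X_k|] ≤ nK + 2√(nK)`. -/
theorem stmt_10 {Ωt : Type*} [m : MeasurableSpace Ωt] (P : Measure Ωt)
    [IsProbabilityMeasure P]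
    (n : ℕ) (𝒢 : ℕ → MeasurableSpace Ωt)
    (hmono : ∀ i j, i ≤ j → 𝒢 i ≤ 𝒢 j) (hle : ∀ i, 𝒢 i ≤ m)
    (X : ℕ → Ωt → ℝ)
    (hL2 : ∀ i ≤ n, MemLp (X i) 2 P)
    (hadapted : ∀ i ≤ n, StronglyMeasurable[𝒢 i] (X i))
    (hX0 : ∀ ω, X 0 ω = 0)
    (K : ℝ) (hK : 0 ≤ K)
    (hdrift : ∀ i < n, ∀ᵐ ω ∂P,
      |(P[fun ω' => X (i + 1) ω' - X i ω' | 𝒢 i]) ω| ≤ K)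
    (hvar : ∀ i < n, ∀ᵐ ω ∂P,
      (P[fun ω' => (X (i + 1) ω' - X i ω'
          - (P[fun ω'' => X (i + 1) ω'' - X i ω'' | 𝒢 i]) ω') ^ 2 | 𝒢 i]) ω ≤ K) :
    (∫ ω, ((Finset.range (n + 1)).sup' Finset.nonempty_range_add_one fun k => |X k ω|) ∂P)
      ≤ n * K + 2 * Real.sqrt (n * K) := by
  classical
  let ℱ : Filtration ℕ m := ⟨𝒢, fun i j h => hmono i j h, hle⟩
  set Y : ℕ → Ωt → ℝ := fun i => X (min i n) with hYdef
  have hYX : ∀ k ≤ n, Y k = X k := fun k hk => by simp [hYdef, min_eq_left hk]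
  have hY2 : ∀ i, MemLp (Y i) 2 P := fun i => hL2 _ (min_le_right i n)
  have hYint : ∀ i, Integrable (Y i) P := fun i => (hY2 i).integrable one_le_two
  have hYad : StronglyAdapted ℱ Y := fun i =>
    (hadapted _ (min_le_right i n)).mono (hmono _ _ (min_le_left i n))
  set A : ℕ → Ωt → ℝ := predictablePart Y ℱ P with hAdef
  set M : ℕ → Ωt → ℝ := martingalePart Y ℱ P with hMdef
  have hMmart : Martingale M ℱ P := martingale_martingalePart hYad hYint
  set D : ℕ → Ωt → ℝ := fun i ω => Y (i+1) ω - Y i ω with hDdef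
  have hD2 : ∀ i, MemLp (D i) 2 P := fun i => (hY2 (i+1)).sub (hY2 i)
  have hDint : ∀ i, Integrable (D i) P := fun i => (hD2 i).integrable one_le_two
  have hDX : ∀ i < n, D i = fun ω => X (i+1) ω - X i ω := by
    intro i hi
    funext ω
    simp [hDdef, hYdef, min_eq_left hi.le, min_eq_left (Nat.succ_le_of_lt hi)]
  have hdriftY : ∀ i, ∀ᵐ ω ∂P, |(P[D i | 𝒢 i]) ω| ≤ K := by
    intro i
    by_cases hi : i < n
    · rw [hDX i hi]; exact hdrift i hi
    · have hD0 : D i = (0 : Ωt → ℝ) := by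
        funext ω
        simp [hDdef, hYdef, min_eq_right (le_of_not_gt hi),
          min_eq_right ((le_of_not_gt hi).trans (Nat.le_succ i))]
      rw [hD0, condExp_zero]
      filter_upwards with ω
      simpa using hK
  have hAk : ∀ k ω, A k ω = ∑ j ∈ Finset.range k, (P[D j | 𝒢 j]) ω := by
    intro k ω
    rw [hAdef]
    simp only [predictablePart, Finset.sum_apply]
    rfl
  have hAbound : ∀ᵐ ω ∂P, ∀ k ≤ n, |A k ω| ≤ n * K := by
    filter_upwards [ae_all_iff.2 hdriftY] with ω hω k hk
    rw [hAk k ω]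
    calc |∑ j ∈ Finset.range k, (P[D j | 𝒢 j]) ω|
        ≤ ∑ j ∈ Finset.range k, |(P[D j | 𝒢 j]) ω| := Finset.abs_sum_le_sum_abs _ _
      _ ≤ ∑ _j ∈ Finset.range k, K := Finset.sum_le_sum fun j _ => hω j
      _ = k * K := by simp [mul_comm]
      _ ≤ n * K := by
          have : (k:ℝ) ≤ n := Nat.cast_le.2 hk
          nlinarith
  have hMk : ∀ k ω, M k ω = Y k ω - A k ω := fun k ω => rfl
  have hM0 : ∀ ω, M 0 ω = 0 := by
    intro ω
    have := hMk 0 ω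
    rw [this, hAk 0 ω]
    simp [hYdef, hX0 ω]
  set ΔM : ℕ → Ωt → ℝ := fun i ω => M (i+1) ω - M i ω with hΔdef
  have hAsucc : ∀ i ω, A (i+1) ω - A i ω = (P[D i | 𝒢 i]) ω := by
    intro i ω
    rw [hAk (i+1) ω, hAk i ω, Finset.sum_range_succ]
    ring
  have hΔeq : ∀ i, ΔM i = fun ω => D i ω - (P[D i | 𝒢 i]) ω := by
    intro i
    funext ω
    have h1 := hMk (i+1) ω
    have h2 := hMk i ω
    have h3 := hAsucc i ω
    simp only [hΔdef, hDdef]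
    rw [h1, h2]
    have : Y (i+1) ω - Y i ω = D i ω := rfl
    rw [show Y (i+1) ω - A (i+1) ω - (Y i ω - A i ω)
      = (Y (i+1) ω - Y i ω) - (A (i+1) ω - A i ω) by ring, h3]
  have hcexp2 : ∀ i, MemLp (P[D i | 𝒢 i]) 2 P := fun i =>
    MemLp.of_bound (stronglyMeasurable_condExp.mono (hle i)).aestronglyMeasurable K
      (by simpa [Real.norm_eq_abs] using hdriftY i)
  have hΔ2 : ∀ i, MemLp (ΔM i) 2 P := by
    intro i
    rw [hΔeq i]
    exact (hD2 i).sub (hcexp2 i)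
  have hΔint : ∀ i, Integrable (ΔM i) P := fun i => (hΔ2 i).integrable one_le_two
  have hΔsq_int : ∀ i, Integrable (fun ω => ΔM i ω ^ 2) P := fun i => (hΔ2 i).integrable_sq
  have hM2 : ∀ k, MemLp (M k) 2 P := by
    intro k
    have hsum : M k = ∑ i ∈ Finset.range k, ΔM i := by
      funext ω
      rw [Finset.sum_apply]
      have := Finset.sum_range_sub (fun i => M i ω) k
      simp only [hΔdef]
      rw [this, hM0 ω, sub_zero]
    rw [hsum]
    exact memLp_finsetSum' _ fun i _ => hΔ2 i
  have hMint : ∀ k, Integrable (M k) P := fun k => hMmart.integrable k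
  have hMsq_int : ∀ k, Integrable (fun ω => M k ω ^ 2) P := fun k => (hM2 k).integrable_sq
  have hMΔint : ∀ k, Integrable (fun ω => M k ω * ΔM k ω) P := fun k =>
    Stmt10Aux.integrable_mul2 (hM2 k) (hΔ2 k)
  have hcondΔ : ∀ i, P[ΔM i | 𝒢 i] =ᵐ[P] 0 := by
    intro i
    have h1 : P[ΔM i | 𝒢 i] =ᵐ[P] P[D i | 𝒢 i] - P[P[D i | 𝒢 i] | 𝒢 i] := by
      rw [hΔeq i]
      exact condExp_sub (hDint i) integrable_condExp (𝒢 i)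
    have h2 : P[P[D i | 𝒢 i] | 𝒢 i] = P[D i | 𝒢 i] :=
      condExp_of_stronglyMeasurable (hle i) stronglyMeasurable_condExp integrable_condExp
    filter_upwards [h1] with ω hω
    rw [hω, Pi.sub_apply, h2]
    simp
  have hcrosscond : ∀ i, P[fun ω => M i ω * ΔM i ω | 𝒢 i] =ᵐ[P] 0 := by
    intro i
    have hpull : P[fun ω => M i ω * ΔM i ω | 𝒢 i] =ᵐ[P] M i * P[ΔM i | 𝒢 i] :=
      condExp_mul_of_stronglyMeasurable_left (hMmart.stronglyAdapted i) (hMΔint i) (hΔint i)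
    filter_upwards [hpull, hcondΔ i] with ω h1 h2
    rw [h1, Pi.mul_apply, h2]
    simp
  have hcross : ∀ k, ∫ ω, M k ω * ΔM k ω ∂P = 0 := by
    intro k
    rw [← integral_condExp (hle k), integral_congr_ae (hcrosscond k)]
    simp
  have hvarM : ∀ i < n, ∫ ω, ΔM i ω ^ 2 ∂P ≤ K := by
    intro i hi
    have heqf : (fun ω => ΔM i ω ^ 2) = (fun ω' => (X (i+1) ω' - X i ω'
        - (P[fun ω'' => X (i + 1) ω'' - X i ω'' | 𝒢 i]) ω') ^ 2) := by
      rw [hΔeq i, hDX i hi]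
    rw [← integral_condExp (hle i)]
    have hb : ∀ᵐ ω ∂P, (P[fun ω => ΔM i ω ^ 2 | 𝒢 i]) ω ≤ K := by
      rw [heqf]
      exact hvar i hi
    calc ∫ ω, (P[fun ω => ΔM i ω ^ 2 | 𝒢 i]) ω ∂P ≤ ∫ _ω, K ∂P :=
          integral_mono_ae integrable_condExp (integrable_const K) hb
      _ = K := by simp
  have hEM : ∀ k, k ≤ n → ∫ ω, M k ω ^ 2 ∂P ≤ k * K := by
    intro k
    induction k with
    | zero => intro _; simp [hM0]
    | succ k ih =>
      intro hk
      have hk' : k ≤ n := Nat.le_of_succ_le hk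
      have hkn : k < n := Nat.lt_of_succ_le hk
      have hexp : (fun ω => M (k+1) ω ^ 2)
          = fun ω => M k ω ^ 2 + (2 * (M k ω * ΔM k ω) + ΔM k ω ^ 2) := by
        funext ω
        have hΔ : M (k+1) ω = M k ω + ΔM k ω := by simp [hΔdef]
        rw [hΔ]; ring
      have hint2 : Integrable (fun ω => 2 * (M k ω * ΔM k ω) + ΔM k ω ^ 2) P :=
        ((hMΔint k).const_mul 2).add (hΔsq_int k)
      have hintegral : ∫ ω, M (k+1) ω ^ 2 ∂P
          = (∫ ω, M k ω ^ 2 ∂P) + ((2 * ∫ ω, M k ω * ΔM k ω ∂P) + ∫ ω, ΔM k ω ^ 2 ∂P) := by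
        rw [hexp, integral_add (hMsq_int k) hint2,
          integral_add ((hMΔint k).const_mul 2) (hΔsq_int k), integral_const_mul]
      rw [hintegral, hcross k]
      have h1 := ih hk'
      have h2 := hvarM k hkn
      push_cast
      linarith
  set V : ℝ := ∫ ω, M n ω ^ 2 ∂P with hVdef
  have hV0 : 0 ≤ V := integral_nonneg fun ω => sq_nonneg _
  have hVnK : V ≤ n * K := hEM n le_rfl
  have hsubm : Submartingale (fun k ω => M k ω ^ 2) ℱ P := by
    refine submartingale_nat (fun k => ?_) (fun k => hMsq_int k) (fun i => ?_)
    · show StronglyMeasurable[ℱ k] fun ω => M k ω ^ 2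
      simp_rw [pow_two]
      exact (hMmart.stronglyAdapted k).mul (hMmart.stronglyAdapted k)
    · have hexp : (fun ω => M (i+1) ω ^ 2)
          = fun ω => M i ω ^ 2 + (2 * (M i ω * ΔM i ω) + ΔM i ω ^ 2) := by
        funext ω
        have hΔ : M (i+1) ω = M i ω + ΔM i ω := by simp [hΔdef]
        rw [hΔ]; ring
      have hint2 : Integrable (fun ω => 2 * (M i ω * ΔM i ω) + ΔM i ω ^ 2) P :=
        ((hMΔint i).const_mul 2).add (hΔsq_int i)
      have e1 : P[fun ω => M (i+1) ω ^ 2 | 𝒢 i]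
          =ᵐ[P] P[fun ω => M i ω ^ 2 | 𝒢 i]
            + P[fun ω => 2 * (M i ω * ΔM i ω) + ΔM i ω ^ 2 | 𝒢 i] := by
        rw [hexp]
        exact condExp_add (hMsq_int i) hint2 (𝒢 i)
      have e2 : P[fun ω => 2 * (M i ω * ΔM i ω) + ΔM i ω ^ 2 | 𝒢 i]
          =ᵐ[P] P[fun ω => 2 * (M i ω * ΔM i ω) | 𝒢 i] + P[fun ω => ΔM i ω ^ 2 | 𝒢 i] :=
        condExp_add ((hMΔint i).const_mul 2) (hΔsq_int i) (𝒢 i)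
      have e3 : P[fun ω => 2 * (M i ω * ΔM i ω) | 𝒢 i]
          =ᵐ[P] (2:ℝ) • P[fun ω => M i ω * ΔM i ω | 𝒢 i] := condExp_smul (2:ℝ) _ (𝒢 i)
      have e5 : P[fun ω => M i ω ^ 2 | 𝒢 i] = fun ω => M i ω ^ 2 := by
        refine condExp_of_stronglyMeasurable (hle i) ?_ (hMsq_int i)
        simp_rw [pow_two]
        exact (hMmart.stronglyAdapted i).mul (hMmart.stronglyAdapted i)
      have e6 : (0 : Ωt → ℝ) ≤ᵐ[P] P[fun ω => ΔM i ω ^ 2 | 𝒢 i] :=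
        condExp_nonneg (Filter.Eventually.of_forall fun ω => sq_nonneg _)
      filter_upwards [e1, e2, e3, hcrosscond i, e6] with ω h1 h2 h3 h4 h6
      show M i ω ^ 2 ≤ (P[fun ω => M (i+1) ω ^ 2 | 𝒢 i]) ω
      rw [h1, Pi.add_apply, h2, Pi.add_apply, h3, Pi.smul_apply, h4, e5]
      have h6' : (0:ℝ) ≤ (P[fun ω => ΔM i ω ^ 2 | 𝒢 i]) ω := h6
      simp only [Pi.zero_apply, smul_zero]
      linarith
  set S : Ωt → ℝ := fun ω =>
    (Finset.range (n+1)).sup' Finset.nonempty_range_add_one fun k => |M k ω| with hSdef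
  have hSint : Integrable S P :=
    Stmt10Aux.integrable_sup'' _ _ _ fun k _ => (hMint k).abs
  have hSnn : ∀ ω, 0 ≤ S ω := fun ω =>
    le_trans (abs_nonneg (M 0 ω)) (Finset.le_sup' (fun k => |M k ω|) (Finset.mem_range.2 (Nat.succ_pos n)))
  have htail : ∀ t, 0 < t → (P {ω | t < S ω}).toReal ≤ V / t ^ 2 := by
    intro t ht
    set ε : NNReal := ⟨t ^ 2, sq_nonneg t⟩ with hεdef
    set B := {ω | (ε:ℝ) ≤ (Finset.range (n+1)).sup' Finset.nonempty_range_add_one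
      fun k => M k ω ^ 2} with hBdef
    have hsub : {ω | t < S ω} ⊆ B := by
      intro ω hω
      simp only [Set.mem_setOf_eq, hSdef] at hω
      rw [Finset.lt_sup'_iff] at hω
      obtain ⟨k, hk, hkt⟩ := hω
      rw [hBdef, Set.mem_setOf_eq, Finset.le_sup'_iff]
      refine ⟨k, hk, ?_⟩
      show (ε:ℝ) ≤ M k ω ^ 2
      have habs : t ^ 2 ≤ |M k ω| ^ 2 := by nlinarith [abs_nonneg (M k ω)]
      rw [sq_abs] at habs
      exact habs
    have hmax := maximal_ineq hsubm (fun k ω => sq_nonneg (M k ω)) (ε := ε) n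
    have hr : ENNReal.ofReal (∫ ω in B, M n ω ^ 2 ∂P) ≤ ENNReal.ofReal V :=
      ENNReal.ofReal_le_ofReal
        (setIntegral_le_integral (hMsq_int n) (Filter.Eventually.of_forall fun ω => sq_nonneg _))
    have hεofReal : ((ε : ℝ≥0∞)) = ENNReal.ofReal (t ^ 2) := by
      rw [ENNReal.ofReal, Real.toNNReal_of_nonneg (sq_nonneg t)]; rfl
    have h1 : ENNReal.ofReal (t ^ 2) * P B ≤ ENNReal.ofReal V := by
      have h := hmax.trans hr
      rwa [hεofReal] at h
    have h2 : P {ω | t < S ω} ≤ ENNReal.ofReal V / ENNReal.ofReal (t ^ 2) := by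
      refine le_trans (measure_mono hsub) ?_
      rw [ENNReal.le_div_iff_mul_le
        (Or.inl (ENNReal.ofReal_pos.2 (by positivity)).ne') (Or.inl ENNReal.ofReal_ne_top)]
      rw [mul_comm]
      exact h1
    have hne : ENNReal.ofReal V / ENNReal.ofReal (t ^ 2) ≠ ⊤ :=
      (ENNReal.div_lt_top ENNReal.ofReal_ne_top (ENNReal.ofReal_pos.2 (by positivity)).ne').ne
    calc (P {ω | t < S ω}).toReal
        ≤ (ENNReal.ofReal V / ENNReal.ofReal (t ^ 2)).toReal := ENNReal.toReal_mono hne h2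
      _ = V / t ^ 2 := by
          rw [ENNReal.toReal_div, ENNReal.toReal_ofReal hV0,
            ENNReal.toReal_ofReal (sq_nonneg t)]
  have hES : ∀ c, 0 < c → ∫ ω, S ω ∂P ≤ c + V / c := by
    intro c hc
    rw [hSint.integral_eq_integral_meas_lt (Filter.Eventually.of_forall hSnn)]
    refine Stmt10Aux.tail_integral_le _ ?_ (fun t => ENNReal.toReal_nonneg) ?_ hV0 hc (fun t htc => htail t (hc.trans htc))
    · intro a b hab
      exact ENNReal.toReal_mono (measure_ne_top _ _)
        (measure_mono fun ω h => lt_of_le_of_lt hab h)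
    · intro t
      exact ENNReal.toReal_mono ENNReal.one_ne_top prob_le_one |>.trans_eq ENNReal.toReal_one
  have hptwise : ∀ᵐ ω ∂P,
      ((Finset.range (n+1)).sup' Finset.nonempty_range_add_one fun k => |X k ω|)
        ≤ n * K + S ω := by
    filter_upwards [hAbound] with ω hA'
    refine Finset.sup'_le _ _ fun k hk => ?_
    have hk' : k ≤ n := Finset.mem_range_succ_iff.1 hk
    have hXM : X k ω = M k ω + A k ω := by
      have h1 := hMk k ω
      have h2 : Y k ω = X k ω := by rw [hYX k hk']
      linarith
    rw [hXM]
    calc |M k ω + A k ω| ≤ |M k ω| + |A k ω| := abs_add_le _ _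
      _ ≤ S ω + n * K := add_le_add (Finset.le_sup' (fun j => |M j ω|) hk) (hA' k hk')
      _ = n * K + S ω := by ring
  have hLHSint : Integrable (fun ω =>
      (Finset.range (n+1)).sup' Finset.nonempty_range_add_one fun k => |X k ω|) P :=
    Stmt10Aux.integrable_sup'' _ _ _ fun k hk =>
      ((hL2 k (Finset.mem_range_succ_iff.1 hk)).integrable one_le_two).abs
  have key : (∫ ω, ((Finset.range (n + 1)).sup' Finset.nonempty_range_add_one
      fun k => |X k ω|) ∂P) ≤ ∫ ω, (n * K + S ω) ∂P :=
    integral_mono_ae hLHSint (((integrable_const (n * K))).add hSint) hptwise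
  have hconst : ∫ ω, (n * K + S ω) ∂P = n * K + ∫ ω, S ω ∂P := by
    rw [integral_add (integrable_const _) hSint]
    simp
  have hsqrt : ∫ ω, S ω ∂P ≤ 2 * Real.sqrt (n * K) := by
    rcases eq_or_lt_of_le (by positivity : (0:ℝ) ≤ (n:ℝ) * K) with h0 | hpos
    · have hV0' : V = 0 := le_antisymm (hVnK.trans h0.ge) hV0
      have hle0 : ∫ ω, S ω ∂P ≤ 0 := by
        refine le_of_forall_pos_le_add ?_
        intro c hc
        have := hES c hc
        rw [hV0'] at this
        simpa using this
      have : 0 ≤ 2 * Real.sqrt ((n:ℝ) * K) := by positivity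
      linarith
    · have hc : 0 < Real.sqrt ((n:ℝ) * K) := Real.sqrt_pos.2 hpos
      have h := hES _ hc
      have hdiv : V / Real.sqrt ((n:ℝ) * K) ≤ Real.sqrt ((n:ℝ) * K) := by
        rw [div_le_iff₀ hc]
        nlinarith [Real.sq_sqrt hpos.le]
      linarith
  linarith
end

section
/- In the finite-difference setting, there exist a constant C > 0 and a threshold n₀ ∈ ℕ, both depending only on L, λ, ε and T (and not on n), such that for all n ≥ n₀, all grid times t_k (0 ≤ k ≤ n) and all ω, ω' ∈ Ω: |u^h(t_k, ω) − u^h(t_k, ω')| ≤ C ‖ω_{t_k∧·} − ω'_{t_k∧·}‖. That is, the finite-difference numerical solutions are Lipschitz in the path variable, uniformly in the time step h. -/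
noncomputable section

/-- The path space `Ω`: continuous real paths starting from `0`
(only their restriction to `[0,T]` is relevant). -/
abbrev Path1 := {ω : ℝ → ℝ // Continuous ω ∧ ω 0 = 0}

/-- The uniform norm over `[0,T]`: `‖f‖ = sup_{0 ≤ s ≤ T} |f s|`. -/
def supNorm (T : ℝ) (f : ℝ → ℝ) : ℝ := ⨆ s : Set.Icc (0 : ℝ) T, |f s.1|

/-- The stopped path `ω_{t∧·} : s ↦ ω_{t ∧ s}`. -/
def stopPath (ω : Path1) (t : ℝ) (ht : 0 ≤ t) : Path1 :=
  ⟨fun s => ω.1 (min t s),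
   ⟨ω.2.1.comp (continuous_const.min continuous_id),
    by
      have h1 : min t (0 : ℝ) = 0 := min_eq_right ht
      simp only [h1, ω.2.2]⟩⟩

/-- The path `ω ⊗_t^h x`: equal to `ω` on `[0,t]`, to `ω_t + x (s−t)/h` on `[t, t+h]`,
and to `ω_t + x` on `[t+h, ∞)`. -/
def bumpPath (ω : Path1) (t h x : ℝ) (ht : 0 ≤ t) (hh : 0 < h) : Path1 :=
  ⟨fun s => ω.1 (min t s) + x * min (max ((s - t) / h) 0) 1,
   ⟨(ω.2.1.comp (continuous_const.min continuous_id)).add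
      (continuous_const.mul
        ((((continuous_id.sub continuous_const).div_const h).max continuous_const).min
          continuous_const)),
    by
      have h0 : ((0 : ℝ) - t) / h ≤ 0 :=
        div_nonpos_iff.mpr (Or.inr ⟨by linarith, hh.le⟩)
      have h1 : max (((0 : ℝ) - t) / h) 0 = 0 := max_eq_right h0
      have h2 : min t (0 : ℝ) = 0 := min_eq_right ht
      simp only [h2, h1, ω.2.2, min_eq_left zero_le_one, mul_zero, add_zero]⟩⟩

/-- The discrete derivative `𝒟⁰_h ψ(t,ω) = ψ(ω_{t∧·})`. -/
def D0 (ψ : Path1 → ℝ) (t : ℝ) (ht : 0 ≤ t) (ω : Path1) : ℝ := ψ (stopPath ω t ht)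

/-- The discrete derivative `𝒟¹_h ψ(t,ω) = [ψ(ω ⊗_t^h Δx) − ψ(ω_{t∧·})]/Δx`. -/
def D1 (ψ : Path1 → ℝ) (t h dx : ℝ) (ht : 0 ≤ t) (hh : 0 < h) (ω : Path1) : ℝ :=
  (ψ (bumpPath ω t h dx ht hh) - ψ (stopPath ω t ht)) / dx

/-- The discrete derivative
`𝒟²_h ψ(t,ω) = [ψ(ω ⊗_t^h Δx) − 2ψ(ω_{t∧·}) + ψ(ω ⊗_t^h (−Δx))]/Δx²`. -/
def D2 (ψ : Path1 → ℝ) (t h dx : ℝ) (ht : 0 ≤ t) (hh : 0 < h) (ω : Path1) : ℝ :=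
  (ψ (bumpPath ω t h dx ht hh) - 2 * ψ (stopPath ω t ht) + ψ (bumpPath ω t h (-dx) ht hh)) / dx ^ 2

lemma mvt_aux (f f' : ℝ → ℝ) (hf : ∀ x, HasDerivAt f (f' x) x) (a b : ℝ) :
    ∃ c, f b - f a = f' c * (b - a) := by
  rcases lt_trichotomy a b with hab | hab | hab
  · obtain ⟨c, _, hc⟩ := exists_hasDerivAt_eq_slope f f' hab
      (fun x _ => (hf x).continuousAt.continuousWithinAt) (fun x _ => hf x)
    exact ⟨c, by rw [hc, div_mul_cancel₀ _ (sub_ne_zero.mpr hab.ne')]⟩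
  · exact ⟨a, by rw [hab]; ring⟩
  · obtain ⟨c, _, hc⟩ := exists_hasDerivAt_eq_slope f f' hab
      (fun x _ => (hf x).continuousAt.continuousWithinAt) (fun x _ => hf x)
    refine ⟨c, ?_⟩
    rw [hc]
    have h : a - b ≠ 0 := sub_ne_zero.mpr hab.ne'
    rw [div_mul_eq_mul_div, eq_div_iff h]
    ring

lemma supNorm_nonneg' (T : ℝ) (f : ℝ → ℝ) : 0 ≤ supNorm T f :=
  Real.iSup_nonneg fun _ => abs_nonneg _

lemma supNorm_congr' {T : ℝ} {f g : ℝ → ℝ} (h : ∀ s ∈ Set.Icc (0 : ℝ) T, f s = g s) :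
    supNorm T f = supNorm T g :=
  iSup_congr fun s => by rw [h s.1 s.2]

set_option maxHeartbeats 1000000 in
lemma step_aux (L lam eps dt sq A B Cg d0 dp dm R C' M X : ℝ)
    (hlam : 0 < lam) (heps0 : 0 < eps)
    (hsq0 : 0 < sq) (hdtsq : dt = sq ^ 2)
    (hA : |A| ≤ L) (hB : |B| ≤ L) (hCg1 : eps ≤ Cg) (hCg2 : Cg ≤ (1/2 - eps) * lam ^ 2)
    (c1 : dt * L ≤ eps) (c2 : sq * lam * L ≤ eps) (c3 : sq * L ≤ eps * lam)
    (hR : |R| ≤ L * M) (hM : 0 ≤ M) (hC' : 0 ≤ C')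
    (h0 : |d0| ≤ C' * M) (hp : |dp| ≤ C' * M) (hm : |dm| ≤ C' * M)
    (hX : X = d0 + dt * (A * d0 + B * ((dp - d0) / (lam * sq)) +
      Cg * ((dp - 2 * d0 + dm) / (lam * sq) ^ 2) + R)) :
    |X| ≤ ((1 + dt * L) * C' + dt * L) * M := by
  obtain ⟨hA1, hA2⟩ := abs_le.mp hA
  obtain ⟨hB1, hB2⟩ := abs_le.mp hB
  have hl : lam ≠ 0 := hlam.ne'
  have hs : sq ≠ 0 := hsq0.ne'
  have hdt0 : 0 ≤ dt := by rw [hdtsq]; positivity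
  set α := (lam^2 + dt*A*lam^2 - sq*lam*B - 2*Cg)/lam^2 with hα
  set β := (sq*lam*B + Cg)/lam^2 with hβ
  set c := Cg/lam^2 with hc
  have hid : X = α * d0 + β * dp + c * dm + dt * R := by
    rw [hX, hα, hβ, hc, hdtsq]
    field_simp
    ring
  have hα0 : 0 ≤ α := by
    rw [hα]
    apply div_nonneg _ (sq_nonneg lam)
    nlinarith [mul_le_mul_of_nonneg_right c3 hlam.le,
      mul_le_mul_of_nonneg_left hA1 (mul_nonneg hdt0 (sq_nonneg lam)),
      mul_le_mul_of_nonneg_left hB2 (mul_nonneg hsq0.le hlam.le),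
      mul_le_mul_of_nonneg_right c1 (sq_nonneg lam)]
  have hβ0 : 0 ≤ β := by
    rw [hβ]
    apply div_nonneg _ (sq_nonneg lam)
    nlinarith [mul_le_mul_of_nonneg_left hB1 (mul_nonneg hsq0.le hlam.le)]
  have hc0 : 0 ≤ c := by
    rw [hc]
    exact div_nonneg (by linarith) (sq_nonneg lam)
  have hsum : α + β + c = 1 + dt * A := by
    rw [hα, hβ, hc]; field_simp; ring
  clear_value α β c
  calc |X| = |α * d0 + β * dp + c * dm + dt * R| := by rw [hid]
    _ ≤ |α * d0 + β * dp + c * dm| + |dt * R| := abs_add_le _ _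
    _ ≤ |α * d0 + β * dp| + |c * dm| + |dt * R| := by
        linarith [abs_add_le (α * d0 + β * dp) (c * dm)]
    _ ≤ |α * d0| + |β * dp| + |c * dm| + |dt * R| := by
        linarith [abs_add_le (α * d0) (β * dp)]
    _ = α * |d0| + β * |dp| + c * |dm| + dt * |R| := by
        rw [abs_mul, abs_mul, abs_mul, abs_mul, abs_of_nonneg hα0, abs_of_nonneg hβ0,
          abs_of_nonneg hc0, abs_of_nonneg hdt0]
    _ ≤ α * (C' * M) + β * (C' * M) + c * (C' * M) + dt * (L * M) := by
        have e0 := mul_le_mul_of_nonneg_left h0 hα0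
        have e1 := mul_le_mul_of_nonneg_left hp hβ0
        have e2 := mul_le_mul_of_nonneg_left hm hc0
        have e3 := mul_le_mul_of_nonneg_left hR hdt0
        linarith
    _ = (1 + dt * A) * C' * M + dt * L * M := by rw [← hsum]; ring
    _ ≤ ((1 + dt * L) * C' + dt * L) * M := by
        nlinarith [mul_nonneg hC' hM, mul_le_mul_of_nonneg_left hA2 hdt0]

set_option maxHeartbeats 4000000 in
/-- uniform Lipschitz continuity in the path variable of the explicit
finite-difference numerical solutions: there are `C > 0` and `n₀` (independent of `n`)
such that for all `n ≥ n₀`, all grid times `t_k = k T/n` and all paths `ω, ω'`,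
`|u^h(t_k,ω) − u^h(t_k,ω')| ≤ C ‖ω_{t_k∧·} − ω'_{t_k∧·}‖`. -/
theorem stmt_11 (T L lam eps : ℝ) (hT : 0 < T) (hL : 0 ≤ L) (hlam : 0 < lam)
    (heps : eps ∈ Set.Ioo (0 : ℝ) (1 / 2))
    (G Gy Gz Gg : ℝ → Path1 → ℝ → ℝ → ℝ → ℝ)
    -- `G` is `L`-Lipschitz in `ω` (for the stopped sup-norm) and `|G(t,ω,0,0,0)| ≤ L`:
    (hGlip : ∀ t (ω ω' : Path1) y z γ,
      |G t ω y z γ - G t ω' y z γ| ≤ L * supNorm T fun s => ω.1 (min t s) - ω'.1 (min t s))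
    (hG0 : ∀ t ω, |G t ω 0 0 0| ≤ L)
    -- `G` is continuously differentiable in `(y,z,γ)` with partial derivatives `Gy, Gz, Gg`:
    (hdy : ∀ t ω y z γ, HasDerivAt (fun r => G t ω r z γ) (Gy t ω y z γ) y)
    (hdz : ∀ t ω y z γ, HasDerivAt (fun r => G t ω y r γ) (Gz t ω y z γ) z)
    (hdg : ∀ t ω y z γ, HasDerivAt (fun r => G t ω y z r) (Gg t ω y z γ) γ)
    (hdcont : ∀ t ω, Continuous fun p : ℝ × ℝ × ℝ =>
      (Gy t ω p.1 p.2.1 p.2.2, Gz t ω p.1 p.2.1 p.2.2, Gg t ω p.1 p.2.1 p.2.2))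
    -- bounds on the partial derivatives, including the CFL condition:
    (hGyb : ∀ t ω y z γ, |Gy t ω y z γ| ≤ L)
    (hGzb : ∀ t ω y z γ, |Gz t ω y z γ| ≤ L)
    (hGgb : ∀ t ω y z γ, eps ≤ Gg t ω y z γ ∧ Gg t ω y z γ ≤ (1 / 2 - eps) * lam ^ 2)
    -- the terminal condition is bounded by `L` and `L`-Lipschitz:
    (ξ : Path1 → ℝ) (hξb : ∀ ω, |ξ ω| ≤ L)
    (hξlip : ∀ ω ω' : Path1, |ξ ω - ξ ω'| ≤ L * supNorm T fun s => ω.1 s - ω'.1 s) :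
    ∃ C > (0 : ℝ), ∃ n₀ : ℕ, 1 ≤ n₀ ∧ ∀ n : ℕ, n₀ ≤ n →
      ∀ hstep_pos : 0 < T / (n : ℝ),
      ∀ u : ℕ → Path1 → ℝ,
      -- terminal condition of the backward recursion:
      (∀ ω, u n ω = ξ ω) →
      -- the backward finite-difference recursion with `h = T/n`, `t_k = k h`, `Δx = lam √h`:
      (∀ k, k < n → ∀ ω : Path1,
        u k ω =
          u (k + 1) (stopPath ω ((k : ℝ) * (T / n))
              (mul_nonneg (Nat.cast_nonneg k) hstep_pos.le))
          + (T / n) * G ((k : ℝ) * (T / n)) ω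
              (D0 (u (k + 1)) ((k : ℝ) * (T / n))
                (mul_nonneg (Nat.cast_nonneg k) hstep_pos.le) ω)
              (D1 (u (k + 1)) ((k : ℝ) * (T / n)) (T / n) (lam * Real.sqrt (T / n))
                (mul_nonneg (Nat.cast_nonneg k) hstep_pos.le) hstep_pos ω)
              (D2 (u (k + 1)) ((k : ℝ) * (T / n)) (T / n) (lam * Real.sqrt (T / n))
                (mul_nonneg (Nat.cast_nonneg k) hstep_pos.le) hstep_pos ω)) →
      -- conclusion: uniform Lipschitz continuity in `ω` at every grid time:
      ∀ k, k ≤ n → ∀ ω ω' : Path1,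
        |u k ω - u k ω'| ≤
          C * supNorm T fun s =>
            ω.1 (min ((k : ℝ) * (T / n)) s) - ω'.1 (min ((k : ℝ) * (T / n)) s) := by
  obtain ⟨heps0, heps2⟩ := heps
  have hK : (0:ℝ) < L + 1 := by linarith
  set δ := min (eps / (L+1)) (min ((eps / (lam * (L+1))) ^ 2) ((eps * lam / (L+1)) ^ 2)) with hδdef
  have hδ : 0 < δ := by
    refine lt_min (by positivity) (lt_min (by positivity) (by positivity))
  refine ⟨(L + 1) * Real.exp (L * T), by positivity, ⌈T / δ⌉₊ + 1, Nat.le_add_left 1 _, ?_⟩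
  intro n hn hstep u hterm hrec
  have hn1 : 1 ≤ n := le_trans (Nat.le_add_left 1 _) hn
  have hnR : (0:ℝ) < n := by exact_mod_cast Nat.pos_of_ne_zero (by omega)
  set dt := T / (n:ℝ) with hdtdef
  have hdtδ : dt ≤ δ := by
    have h1 : T / δ ≤ (n:ℝ) := by
      calc T / δ ≤ (⌈T/δ⌉₊ : ℝ) := Nat.le_ceil _
        _ ≤ (n:ℝ) := by exact_mod_cast Nat.le_of_succ_le hn
    have h2 : T ≤ (n:ℝ) * δ := (div_le_iff₀ hδ).mp h1
    rw [hdtdef, div_le_iff₀ hnR]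
    linarith
  set sq := Real.sqrt dt with hsqdef
  have hsq0 : 0 < sq := Real.sqrt_pos.mpr hstep
  have hdtsq : dt = sq ^ 2 := (Real.sq_sqrt hstep.le).symm
  have cond1 : dt * L ≤ eps := by
    have h1 : dt ≤ eps / (L+1) := le_trans hdtδ (min_le_left _ _)
    have h2 : dt * L ≤ (eps/(L+1)) * (L+1) :=
      mul_le_mul h1 (by linarith) hL (by positivity)
    rw [div_mul_cancel₀ _ hK.ne'] at h2
    exact h2
  have hsqle1 : sq ≤ eps / (lam * (L+1)) := by
    have h1 : dt ≤ (eps/(lam*(L+1)))^2 :=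
      le_trans hdtδ (le_trans (min_le_right _ _) (min_le_left _ _))
    calc sq ≤ Real.sqrt ((eps/(lam*(L+1)))^2) := Real.sqrt_le_sqrt h1
      _ = eps/(lam*(L+1)) := Real.sqrt_sq (by positivity)
  have cond2 : sq * lam * L ≤ eps := by
    have h2 : sq * (lam * (L+1)) ≤ eps := (le_div_iff₀ (by positivity)).mp hsqle1
    nlinarith [hsq0.le, hlam.le]
  have hsqle2 : sq ≤ eps * lam / (L+1) := by
    have h1 : dt ≤ (eps*lam/(L+1))^2 :=
      le_trans hdtδ (le_trans (min_le_right _ _) (min_le_right _ _))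
    calc sq ≤ Real.sqrt ((eps*lam/(L+1))^2) := Real.sqrt_le_sqrt h1
      _ = eps*lam/(L+1) := Real.sqrt_sq (by positivity)
  have cond3 : sq * L ≤ eps * lam := by
    have h2 : sq * (L+1) ≤ eps * lam := (le_div_iff₀ hK).mp hsqle2
    nlinarith [hsq0.le]
  have main : ∀ m : ℕ, ∀ k : ℕ, k + m = n → ∀ ω ω' : Path1,
      |u k ω - u k ω'| ≤ ((L+1)*(1+dt*L)^m - 1) *
        supNorm T (fun s => ω.1 (min ((k:ℝ)*dt) s) - ω'.1 (min ((k:ℝ)*dt) s)) := by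
    intro m
    induction m with
    | zero =>
      intro k hk ω ω'
      have hkn : k = n := by omega
      subst hkn
      have hT' : (k:ℝ) * dt = T := by
        rw [hdtdef]
        field_simp
      have hcong : (supNorm T fun s => ω.1 (min ((k:ℝ)*dt) s) - ω'.1 (min ((k:ℝ)*dt) s))
          = supNorm T fun s => ω.1 s - ω'.1 s := by
        refine supNorm_congr' fun x hx => ?_
        rw [hT', min_eq_right hx.2]
      rw [hterm ω, hterm ω', hcong, pow_zero]
      calc |ξ ω - ξ ω'| ≤ L * supNorm T (fun s => ω.1 s - ω'.1 s) := hξlip ω ω'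
        _ = ((L+1)*1 - 1) * supNorm T (fun s => ω.1 s - ω'.1 s) := by ring
    | succ m ih =>
      intro k hk ω ω'
      have hklt : k < n := by omega
      have htp : (0:ℝ) ≤ (k:ℝ) * dt := mul_nonneg (Nat.cast_nonneg k) hstep.le
      set t : ℝ := (k:ℝ) * dt with htdef
      set M := supNorm T (fun s => ω.1 (min t s) - ω'.1 (min t s)) with hMdef
      have hMnn : 0 ≤ M := supNorm_nonneg' _ _
      set a0 := u (k+1) (stopPath ω t htp) with ha0def
      set ap := u (k+1) (bumpPath ω t dt (lam*sq) htp hstep) with hapdef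
      set am := u (k+1) (bumpPath ω t dt (-(lam*sq)) htp hstep) with hamdef
      set b0 := u (k+1) (stopPath ω' t htp) with hb0def
      set bp := u (k+1) (bumpPath ω' t dt (lam*sq) htp hstep) with hbpdef
      set bm := u (k+1) (bumpPath ω' t dt (-(lam*sq)) htp hstep) with hbmdef
      have hC' : 0 ≤ (L+1)*(1+dt*L)^m - 1 := by
        have h1 : (1:ℝ) ≤ (1+dt*L)^m :=
          one_le_pow₀ (by linarith [mul_nonneg hstep.le hL])
        have h2 : (1:ℝ)*1 ≤ (L+1)*(1+dt*L)^m :=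
          mul_le_mul (by linarith) h1 zero_le_one (by linarith)
        linarith
      have hmin : ∀ x : ℝ, min t (min (((k:ℝ)+1)*dt) x) = min t x := by
        intro x
        have htle : t ≤ ((k:ℝ)+1)*dt := by
          rw [htdef]
          linarith [hstep.le]
        rw [← min_assoc, min_eq_left htle]
      have hcong0 : (supNorm T fun s => (stopPath ω t htp).1 (min (((k:ℝ)+1)*dt) s)
          - (stopPath ω' t htp).1 (min (((k:ℝ)+1)*dt) s)) = M := by
        refine supNorm_congr' fun x _ => ?_
        show ω.1 (min t (min (((k:ℝ)+1)*dt) x)) - ω'.1 (min t (min (((k:ℝ)+1)*dt) x)) = _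
        rw [hmin x]
      have hcongp : (supNorm T fun s => (bumpPath ω t dt (lam*sq) htp hstep).1 (min (((k:ℝ)+1)*dt) s)
          - (bumpPath ω' t dt (lam*sq) htp hstep).1 (min (((k:ℝ)+1)*dt) s)) = M := by
        refine supNorm_congr' fun x _ => ?_
        show (ω.1 (min t (min (((k:ℝ)+1)*dt) x))
            + (lam*sq) * min (max ((min (((k:ℝ)+1)*dt) x - t)/dt) 0) 1)
          - (ω'.1 (min t (min (((k:ℝ)+1)*dt) x))
            + (lam*sq) * min (max ((min (((k:ℝ)+1)*dt) x - t)/dt) 0) 1) = _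
        rw [hmin x]
        ring
      have hcongm : (supNorm T fun s => (bumpPath ω t dt (-(lam*sq)) htp hstep).1 (min (((k:ℝ)+1)*dt) s)
          - (bumpPath ω' t dt (-(lam*sq)) htp hstep).1 (min (((k:ℝ)+1)*dt) s)) = M := by
        refine supNorm_congr' fun x _ => ?_
        show (ω.1 (min t (min (((k:ℝ)+1)*dt) x))
            + (-(lam*sq)) * min (max ((min (((k:ℝ)+1)*dt) x - t)/dt) 0) 1)
          - (ω'.1 (min t (min (((k:ℝ)+1)*dt) x))
            + (-(lam*sq)) * min (max ((min (((k:ℝ)+1)*dt) x - t)/dt) 0) 1) = _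
        rw [hmin x]
        ring
      have h0 : |a0 - b0| ≤ ((L+1)*(1+dt*L)^m - 1) * M := by
        have ihs := ih (k+1) (by omega) (stopPath ω t htp) (stopPath ω' t htp)
        push_cast at ihs
        rw [← hcong0]
        exact ihs
      have hp : |ap - bp| ≤ ((L+1)*(1+dt*L)^m - 1) * M := by
        have ihs := ih (k+1) (by omega) (bumpPath ω t dt (lam*sq) htp hstep)
          (bumpPath ω' t dt (lam*sq) htp hstep)
        push_cast at ihs
        rw [← hcongp]
        exact ihs
      have hm : |am - bm| ≤ ((L+1)*(1+dt*L)^m - 1) * M := by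
        have ihs := ih (k+1) (by omega) (bumpPath ω t dt (-(lam*sq)) htp hstep)
          (bumpPath ω' t dt (-(lam*sq)) htp hstep)
        push_cast at ihs
        rw [← hcongm]
        exact ihs
      have hrw : u k ω = a0 + dt * G t ω a0 ((ap - a0)/(lam*sq))
          ((ap - 2*a0 + am)/(lam*sq)^2) := hrec k hklt ω
      have hrw' : u k ω' = b0 + dt * G t ω' b0 ((bp - b0)/(lam*sq))
          ((bp - 2*b0 + bm)/(lam*sq)^2) := hrec k hklt ω'
      obtain ⟨cy, hcy0⟩ := mvt_aux
        (fun r => G t ω r ((ap - a0)/(lam*sq)) ((ap - 2*a0 + am)/(lam*sq)^2))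
        (fun r => Gy t ω r ((ap - a0)/(lam*sq)) ((ap - 2*a0 + am)/(lam*sq)^2))
        (fun r => hdy t ω r _ _) b0 a0
      obtain ⟨cz, hcz0⟩ := mvt_aux
        (fun r => G t ω b0 r ((ap - 2*a0 + am)/(lam*sq)^2))
        (fun r => Gz t ω b0 r ((ap - 2*a0 + am)/(lam*sq)^2))
        (fun r => hdz t ω b0 r _) ((bp - b0)/(lam*sq)) ((ap - a0)/(lam*sq))
      obtain ⟨cg, hcg0⟩ := mvt_aux
        (fun r => G t ω b0 ((bp - b0)/(lam*sq)) r)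
        (fun r => Gg t ω b0 ((bp - b0)/(lam*sq)) r)
        (fun r => hdg t ω b0 _ r) ((bp - 2*b0 + bm)/(lam*sq)^2) ((ap - 2*a0 + am)/(lam*sq)^2)
      have hcy : G t ω a0 ((ap - a0)/(lam*sq)) ((ap - 2*a0 + am)/(lam*sq)^2)
          - G t ω b0 ((ap - a0)/(lam*sq)) ((ap - 2*a0 + am)/(lam*sq)^2)
          = Gy t ω cy ((ap - a0)/(lam*sq)) ((ap - 2*a0 + am)/(lam*sq)^2) * (a0 - b0) := hcy0
      have hcz : G t ω b0 ((ap - a0)/(lam*sq)) ((ap - 2*a0 + am)/(lam*sq)^2)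
          - G t ω b0 ((bp - b0)/(lam*sq)) ((ap - 2*a0 + am)/(lam*sq)^2)
          = Gz t ω b0 cz ((ap - 2*a0 + am)/(lam*sq)^2)
            * ((ap - a0)/(lam*sq) - (bp - b0)/(lam*sq)) := hcz0
      have hcg : G t ω b0 ((bp - b0)/(lam*sq)) ((ap - 2*a0 + am)/(lam*sq)^2)
          - G t ω b0 ((bp - b0)/(lam*sq)) ((bp - 2*b0 + bm)/(lam*sq)^2)
          = Gg t ω b0 ((bp - b0)/(lam*sq)) cg
            * ((ap - 2*a0 + am)/(lam*sq)^2 - (bp - 2*b0 + bm)/(lam*sq)^2) := hcg0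
      have hR : |G t ω b0 ((bp - b0)/(lam*sq)) ((bp - 2*b0 + bm)/(lam*sq)^2)
          - G t ω' b0 ((bp - b0)/(lam*sq)) ((bp - 2*b0 + bm)/(lam*sq)^2)| ≤ L * M :=
        hGlip t ω ω' _ _ _
      have hXid : u k ω - u k ω' = (a0 - b0) + dt *
          (Gy t ω cy ((ap - a0)/(lam*sq)) ((ap - 2*a0 + am)/(lam*sq)^2) * (a0 - b0)
          + Gz t ω b0 cz ((ap - 2*a0 + am)/(lam*sq)^2)
            * (((ap - bp) - (a0 - b0)) / (lam*sq))
          + Gg t ω b0 ((bp - b0)/(lam*sq)) cg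
            * (((ap - bp) - 2*(a0 - b0) + (am - bm)) / (lam*sq)^2)
          + (G t ω b0 ((bp - b0)/(lam*sq)) ((bp - 2*b0 + bm)/(lam*sq)^2)
            - G t ω' b0 ((bp - b0)/(lam*sq)) ((bp - 2*b0 + bm)/(lam*sq)^2))) := by
        rw [hrw, hrw']
        linear_combination dt * hcy + dt * hcz + dt * hcg
      have key := step_aux L lam eps dt sq
        (Gy t ω cy ((ap - a0)/(lam*sq)) ((ap - 2*a0 + am)/(lam*sq)^2))
        (Gz t ω b0 cz ((ap - 2*a0 + am)/(lam*sq)^2))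
        (Gg t ω b0 ((bp - b0)/(lam*sq)) cg)
        (a0 - b0) (ap - bp) (am - bm)
        (G t ω b0 ((bp - b0)/(lam*sq)) ((bp - 2*b0 + bm)/(lam*sq)^2)
          - G t ω' b0 ((bp - b0)/(lam*sq)) ((bp - 2*b0 + bm)/(lam*sq)^2))
        ((L+1)*(1+dt*L)^m - 1) M (u k ω - u k ω')
        hlam heps0 hsq0 hdtsq
        (hGyb t ω cy _ _) (hGzb t ω b0 cz _)
        (hGgb t ω b0 _ cg).1 (hGgb t ω b0 _ cg).2
        cond1 cond2 cond3 hR hMnn hC' h0 hp hm hXid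
      have hcoef : (1 + dt*L) * ((L+1)*(1+dt*L)^m - 1) + dt*L
          = (L+1)*(1+dt*L)^(m+1) - 1 := by ring
      calc |u k ω - u k ω'| ≤ ((1 + dt*L) * ((L+1)*(1+dt*L)^m - 1) + dt*L) * M := key
        _ = ((L+1)*(1+dt*L)^(m+1) - 1) * M := by rw [hcoef]
  intro k hk ω ω'
  have hb := main (n - k) k (by omega) ω ω'
  refine hb.trans (mul_le_mul_of_nonneg_right ?_ (supNorm_nonneg' _ _))
  have hdt0 : 0 ≤ dt := hstep.le
  have h1 : (1:ℝ) + dt*L ≤ Real.exp (dt*L) := by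
    linarith [Real.add_one_le_exp (dt*L)]
  have h2 : (1+dt*L)^(n-k) ≤ Real.exp (dt*L)^(n-k) :=
    pow_le_pow_left₀ (by nlinarith [mul_nonneg hdt0 hL]) h1 _
  have h3 : Real.exp (dt*L)^(n-k) = Real.exp (((n-k:ℕ):ℝ)*(dt*L)) :=
    (Real.exp_nat_mul _ _).symm
  have h4 : ((n-k:ℕ):ℝ)*(dt*L) ≤ L*T := by
    have hle : ((n-k:ℕ):ℝ) ≤ (n:ℝ) := by exact_mod_cast Nat.sub_le n k
    have hnt : (n:ℝ) * dt = T := by rw [hdtdef]; field_simp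
    have e1 : ((n-k:ℕ):ℝ)*dt ≤ (n:ℝ)*dt := mul_le_mul_of_nonneg_right hle hdt0
    have e2 : (((n-k:ℕ):ℝ)*dt)*L ≤ ((n:ℝ)*dt)*L := mul_le_mul_of_nonneg_right e1 hL
    rw [hnt] at e2
    nlinarith [e2]
  have h5 : Real.exp (((n-k:ℕ):ℝ)*(dt*L)) ≤ Real.exp (L*T) := Real.exp_le_exp.mpr h4
  have h6 : (1+dt*L)^(n-k) ≤ Real.exp (L*T) := by
    calc (1+dt*L)^(n-k) ≤ Real.exp (dt*L)^(n-k) := h2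
      _ = Real.exp (((n-k:ℕ):ℝ)*(dt*L)) := h3
      _ ≤ Real.exp (L*T) := h5
  have h7 := mul_le_mul_of_nonneg_left h6 (by linarith : (0:ℝ) ≤ L+1)
  linarith
end
end

section
/- In the finite-difference setting, there exists a threshold n₀ ∈ ℕ depending only on L, λ, ε and T such that for all n ≥ n₀, all grid times t_k and all ω ∈ Ω: |u^h(t_k, ω)| ≤ e^{LT}(L + LT). That is, the finite-difference numerical solutions are bounded uniformly in the time step h. -/
noncomputable section

/-- 1-D mean value theorem in the form we need. -/
lemma mvt_exists (f f' : ℝ → ℝ) (hd : ∀ x, HasDerivAt f (f' x) x) (y : ℝ) :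
    ∃ c, f y - f 0 = f' c * y := by
  rcases lt_trichotomy y 0 with hy | hy | hy
  · obtain ⟨c, _, hc⟩ := exists_hasDerivAt_eq_slope f f' hy
      (fun x _ => (hd x).continuousAt.continuousWithinAt) (fun x _ => hd x)
    refine ⟨c, ?_⟩
    have hyne : (0:ℝ) - y ≠ 0 := ne_of_gt (by linarith)
    have h1 : f' c * (0 - y) = f 0 - f y := by rw [hc, div_mul_cancel₀ _ hyne]
    linear_combination h1
  · exact ⟨0, by simp [hy]⟩
  · obtain ⟨c, _, hc⟩ := exists_hasDerivAt_eq_slope f f' hy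
      (fun x _ => (hd x).continuousAt.continuousWithinAt) (fun x _ => hd x)
    refine ⟨c, ?_⟩
    have hyne : y - 0 ≠ 0 := by simpa using hy.ne'
    have h1 : f' c * (y - 0) = f y - f 0 := by rw [hc, div_mul_cancel₀ _ hyne]
    linear_combination -h1

set_option maxHeartbeats 1000000 in
/-- uniform boundedness of the explicit finite-difference numerical
solutions: there is `n₀` (depending only on the data) such that for all `n ≥ n₀`,
all grid times `t_k` and all paths `ω`, `|u^h(t_k,ω)| ≤ e^{LT}(L + LT)`. -/
theorem stmt_12 (T L lam eps : ℝ) (hT : 0 < T) (hL : 0 ≤ L) (hlam : 0 < lam)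
    (heps : eps ∈ Set.Ioo (0 : ℝ) (1 / 2))
    (G Gy Gz Gg : ℝ → Path1 → ℝ → ℝ → ℝ → ℝ)
    -- `G` is `L`-Lipschitz in `ω` (for the stopped sup-norm) and `|G(t,ω,0,0,0)| ≤ L`:
    (hGlip : ∀ t (ω ω' : Path1) y z γ,
      |G t ω y z γ - G t ω' y z γ| ≤ L * supNorm T fun s => ω.1 (min t s) - ω'.1 (min t s))
    (hG0 : ∀ t ω, |G t ω 0 0 0| ≤ L)
    -- `G` is continuously differentiable in `(y,z,γ)` with partial derivatives `Gy, Gz, Gg`: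
    (hdy : ∀ t ω y z γ, HasDerivAt (fun r => G t ω r z γ) (Gy t ω y z γ) y)
    (hdz : ∀ t ω y z γ, HasDerivAt (fun r => G t ω y r γ) (Gz t ω y z γ) z)
    (hdg : ∀ t ω y z γ, HasDerivAt (fun r => G t ω y z r) (Gg t ω y z γ) γ)
    (hdcont : ∀ t ω, Continuous fun p : ℝ × ℝ × ℝ =>
      (Gy t ω p.1 p.2.1 p.2.2, Gz t ω p.1 p.2.1 p.2.2, Gg t ω p.1 p.2.1 p.2.2))
    -- bounds on the partial derivatives, including the CFL condition:
    (hGyb : ∀ t ω y z γ, |Gy t ω y z γ| ≤ L)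
    (hGzb : ∀ t ω y z γ, |Gz t ω y z γ| ≤ L)
    (hGgb : ∀ t ω y z γ, eps ≤ Gg t ω y z γ ∧ Gg t ω y z γ ≤ (1 / 2 - eps) * lam ^ 2)
    -- the terminal condition is bounded by `L` and `L`-Lipschitz:
    (ξ : Path1 → ℝ) (hξb : ∀ ω, |ξ ω| ≤ L)
    (hξlip : ∀ ω ω' : Path1, |ξ ω - ξ ω'| ≤ L * supNorm T fun s => ω.1 s - ω'.1 s) :
    ∃ n₀ : ℕ, 1 ≤ n₀ ∧ ∀ n : ℕ, n₀ ≤ n →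
      ∀ hstep_pos : 0 < T / (n : ℝ),
      ∀ u : ℕ → Path1 → ℝ,
      -- terminal condition of the backward recursion:
      (∀ ω, u n ω = ξ ω) →
      -- the backward finite-difference recursion with `h = T/n`, `t_k = k h`, `Δx = lam √h`:
      (∀ k, k < n → ∀ ω : Path1,
        u k ω =
          u (k + 1) (stopPath ω ((k : ℝ) * (T / n))
              (mul_nonneg (Nat.cast_nonneg k) hstep_pos.le))
          + (T / n) * G ((k : ℝ) * (T / n)) ω
              (D0 (u (k + 1)) ((k : ℝ) * (T / n))
                (mul_nonneg (Nat.cast_nonneg k) hstep_pos.le) ω)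
              (D1 (u (k + 1)) ((k : ℝ) * (T / n)) (T / n) (lam * Real.sqrt (T / n))
                (mul_nonneg (Nat.cast_nonneg k) hstep_pos.le) hstep_pos ω)
              (D2 (u (k + 1)) ((k : ℝ) * (T / n)) (T / n) (lam * Real.sqrt (T / n))
                (mul_nonneg (Nat.cast_nonneg k) hstep_pos.le) hstep_pos ω)) →
      -- conclusion: uniform boundedness at every grid time:
      ∀ k, k ≤ n → ∀ ω : Path1,
        |u k ω| ≤ Real.exp (L * T) * (L + L * T) := by

  obtain ⟨heps0, heps2⟩ := heps
  have hlam2 : (0:ℝ) < lam ^ 2 := by positivity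
  set m : ℝ := min lam lam⁻¹ with hm
  have hm0 : 0 < m := lt_min hlam (inv_pos.mpr hlam)
  set r : ℝ := eps * m / (L + 1) with hrdef
  have hr0 : 0 < r := by positivity
  set d0 : ℝ := min (r ^ 2) (eps / (L + 1)) with hd0
  have hd00 : 0 < d0 := lt_min (by positivity) (by positivity)
  refine ⟨max 1 ⌈T / d0⌉₊, le_max_left _ _, ?_⟩
  intro n hn hstep_pos u hterm hrec
  have hn1 : 1 ≤ n := le_trans (le_max_left _ _) hn
  have hnpos : (0:ℝ) < n := by exact_mod_cast Nat.lt_of_lt_of_le Nat.zero_lt_one hn1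
  set h : ℝ := T / n with hhdef
  have hh : 0 < h := hstep_pos
  have hhd0 : h ≤ d0 := by
    have h1 : T / d0 ≤ (n : ℝ) := le_trans (Nat.le_ceil _)
      (by exact_mod_cast le_trans (le_max_right _ _) hn)
    rw [hhdef, div_le_iff₀ hnpos]
    calc T = (T / d0) * d0 := by field_simp
    _ ≤ d0 * (n:ℝ) := by
        have := mul_le_mul_of_nonneg_right h1 hd00.le
        linarith [this]
  set s : ℝ := Real.sqrt h with hsdef
  have hs : 0 < s := Real.sqrt_pos.mpr hh
  have hs2 : s ^ 2 = h := Real.sq_sqrt hh.le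
  have hsr : s ≤ r := by
    have hle : h ≤ r ^ 2 := le_trans hhd0 (min_le_left _ _)
    nlinarith [hs, hr0]
  have hLs : (L + 1) * s ≤ eps * m := by
    have h1 : (L + 1) * s ≤ (L + 1) * r := by nlinarith
    have h2 : (L + 1) * r = eps * m := by rw [hrdef]; field_simp
    linarith
  have hLs1 : L * s ≤ eps * lam := by
    have h1 : L * s ≤ (L + 1) * s := by nlinarith
    have h2 : eps * m ≤ eps * lam :=
      mul_le_mul_of_nonneg_left (min_le_left lam lam⁻¹) heps0.le
    linarith
  have hLs2 : L * s * lam ≤ eps := by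
    have h1 : L * s ≤ (L + 1) * s := by nlinarith
    have h2 : eps * m ≤ eps * lam⁻¹ :=
      mul_le_mul_of_nonneg_left (min_le_right lam lam⁻¹) heps0.le
    have h3 : L * s ≤ eps * lam⁻¹ := by linarith
    have h4 : L * s * lam ≤ eps * lam⁻¹ * lam :=
      mul_le_mul_of_nonneg_right h3 hlam.le
    have h5 : eps * lam⁻¹ * lam = eps := by field_simp
    linarith
  have hLh : L * h ≤ eps := by
    have h1 : h ≤ eps / (L + 1) := le_trans hhd0 (min_le_right _ _)
    have h2 : (L + 1) * h ≤ eps := by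
      rw [le_div_iff₀ (by positivity)] at h1; nlinarith
    nlinarith
  set dx : ℝ := lam * s with hdxdef
  have hdx : 0 < dx := by positivity
  have hbase : (1:ℝ) ≤ 1 + h * L := by linarith [mul_nonneg hh.le hL]
  -- the backward induction bound
  have main : ∀ j : ℕ, j ≤ n → ∀ ω : Path1,
      |u (n - j) ω| ≤ (1 + h * L) ^ j * (L + (j : ℝ) * h * L) := by
    intro j
    induction j with
    | zero =>
      intro _ ω
      simpa [hterm ω] using hξb ω
    | succ j ih =>
      intro hjn ω
      have hjn' : j ≤ n := by omega
      have hk1 : n - (j + 1) + 1 = n - j := by omega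
      set k : ℕ := n - (j + 1) with hkdef
      have hkn : k < n := by omega
      set t : ℝ := (k : ℝ) * (T / n) with htdef
      set B : ℝ := (1 + h * L) ^ j * (L + (j : ℝ) * h * L) with hBdef
      have hjhL : (0:ℝ) ≤ (j : ℝ) * h * L :=
        mul_nonneg (mul_nonneg (Nat.cast_nonneg j) hh.le) hL
      have hB0 : 0 ≤ B := by
        rw [hBdef]
        exact mul_nonneg (by positivity) (by linarith)
      have hrec' := hrec k hkn ω
      set ψ0 : ℝ := u (k + 1) (stopPath ω t (mul_nonneg (Nat.cast_nonneg k) hstep_pos.le)) with hψ0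
      set ψp : ℝ := u (k + 1) (bumpPath ω t h dx (mul_nonneg (Nat.cast_nonneg k) hstep_pos.le) hstep_pos) with hψp
      set ψm : ℝ := u (k + 1) (bumpPath ω t h (-dx) (mul_nonneg (Nat.cast_nonneg k) hstep_pos.le) hstep_pos) with hψm
      have hbψ0 : |ψ0| ≤ B := by rw [hψ0, show k + 1 = n - j from hk1]; exact ih hjn' _
      have hbψp : |ψp| ≤ B := by rw [hψp, show k + 1 = n - j from hk1]; exact ih hjn' _
      have hbψm : |ψm| ≤ B := by rw [hψm, show k + 1 = n - j from hk1]; exact ih hjn' _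
      set y : ℝ := ψ0 with hy
      set z : ℝ := (ψp - ψ0) / dx with hz
      set γ : ℝ := (ψp - 2 * ψ0 + ψm) / dx ^ 2 with hγ
      have hreq : u k ω = ψ0 + h * G t ω y z γ := hrec'
      obtain ⟨a, haeq⟩ := mvt_exists (fun v => G t ω v z γ) (fun v => Gy t ω v z γ)
        (fun x => hdy t ω x z γ) y
      obtain ⟨b, hbeq⟩ := mvt_exists (fun v => G t ω 0 v γ) (fun v => Gz t ω 0 v γ)
        (fun x => hdz t ω 0 x γ) z
      obtain ⟨c, hceq⟩ := mvt_exists (fun v => G t ω 0 0 v) (fun v => Gg t ω 0 0 v)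
        (fun x => hdg t ω 0 0 x) γ
      set A : ℝ := Gy t ω a z γ with hA
      set Bz : ℝ := Gz t ω 0 b γ with hBz
      set C : ℝ := Gg t ω 0 0 c with hC
      have hGdec : G t ω y z γ = G t ω 0 0 0 + A * y + Bz * z + C * γ := by
        have e1 : G t ω y z γ - G t ω 0 z γ = A * y := haeq
        have e2 : G t ω 0 z γ - G t ω 0 0 γ = Bz * z := hbeq
        have e3 : G t ω 0 0 γ - G t ω 0 0 0 = C * γ := hceq
        linear_combination e1 + e2 + e3
      have hAb : |A| ≤ L := hGyb t ω a z γ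
      have hBzb : |Bz| ≤ L := hGzb t ω 0 b γ
      have hCb := hGgb t ω 0 0 c
      have hA1 : -L ≤ A := neg_le_of_abs_le hAb
      have hA2 : A ≤ L := le_of_abs_le hAb
      have hB1 : -L ≤ Bz := neg_le_of_abs_le hBzb
      have hB2 : Bz ≤ L := le_of_abs_le hBzb
      set α : ℝ := 1 + h * A - s * Bz / lam - 2 * C / lam ^ 2 with hα
      set β : ℝ := s * Bz / lam + C / lam ^ 2 with hβ
      set δ : ℝ := C / lam ^ 2 with hδ
      have hkey : u k ω = α * ψ0 + β * ψp + δ * ψm + h * G t ω 0 0 0 := by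
        rw [hreq, hGdec, hα, hβ, hδ, hy, hz, hγ, hdxdef, ← hs2]
        field_simp
        ring
      have hδ0 : (0:ℝ) ≤ δ := by
        rw [hδ]
        exact div_nonneg (by linarith [hCb.1]) hlam2.le
      have hβ0 : (0:ℝ) ≤ β := by
        have key : 0 ≤ s * lam * (Bz + L) := mul_nonneg (mul_nonneg hs.le hlam.le) (by linarith)
        have key2 : (0:ℝ) ≤ s * Bz * lam + C := by linarith [key, hCb.1, hLs2]
        rw [hβ, div_add_div _ _ hlam.ne' hlam2.ne']
        apply div_nonneg _ (by positivity)
        have h6 : lam * (s * Bz * lam + C) = s * Bz * lam ^ 2 + lam * C := by ring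
        linarith [mul_nonneg hlam.le key2, h6]
      have hα0 : (0:ℝ) ≤ α := by
        rw [hα]
        have e1 : s * Bz / lam ≤ eps := by
          rw [div_le_iff₀ hlam]
          linarith [mul_le_mul_of_nonneg_left hB2 hs.le, hLs1]
        have e2 : 2 * C / lam ^ 2 ≤ 1 - 2 * eps := by
          rw [div_le_iff₀ hlam2]
          linarith [hCb.2]
        have e3 : -eps ≤ h * A := by
          have h0 : 0 ≤ h * (A + L) := mul_nonneg hh.le (by linarith)
          have h0' : h * (A + L) = h * A + h * L := by ring
          linarith [hLh, mul_comm h L ▸ hLh]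
        linarith
      have hsum : α + β + δ = 1 + h * A := by rw [hα, hβ, hδ]; ring
      have t1 : |α * ψ0| ≤ α * B := by
        rw [abs_mul, abs_of_nonneg hα0]; exact mul_le_mul_of_nonneg_left hbψ0 hα0
      have t2 : |β * ψp| ≤ β * B := by
        rw [abs_mul, abs_of_nonneg hβ0]; exact mul_le_mul_of_nonneg_left hbψp hβ0
      have t3 : |δ * ψm| ≤ δ * B := by
        rw [abs_mul, abs_of_nonneg hδ0]; exact mul_le_mul_of_nonneg_left hbψm hδ0
      have t4 : |h * G t ω 0 0 0| ≤ h * L := by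
        rw [abs_mul, abs_of_nonneg hh.le]
        exact mul_le_mul_of_nonneg_left (hG0 t ω) hh.le
      have habs : |u k ω| ≤ α * B + β * B + δ * B + h * L := by
        rw [hkey]
        calc |α * ψ0 + β * ψp + δ * ψm + h * G t ω 0 0 0|
            ≤ |α * ψ0 + β * ψp + δ * ψm| + |h * G t ω 0 0 0| := abs_add_le _ _
        _ ≤ |α * ψ0 + β * ψp| + |δ * ψm| + |h * G t ω 0 0 0| := by
            linarith [abs_add_le (α * ψ0 + β * ψp) (δ * ψm)]
        _ ≤ |α * ψ0| + |β * ψp| + |δ * ψm| + |h * G t ω 0 0 0| := by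
            linarith [abs_add_le (α * ψ0) (β * ψp)]
        _ ≤ α * B + β * B + δ * B + h * L := by linarith
      have hstep : |u k ω| ≤ (1 + h * L) * B + h * L := by
        have e : α * B + β * B + δ * B = (1 + h * A) * B := by
          rw [← hsum]; ring
        have e2 : (1 + h * A) * B ≤ (1 + h * L) * B := by
          apply mul_le_mul_of_nonneg_right _ hB0
          linarith [mul_le_mul_of_nonneg_left hA2 hh.le]
        linarith
      have hp1 : (1:ℝ) ≤ (1 + h * L) ^ (j + 1) := by
        calc (1:ℝ) = (1 + h * L) ^ 0 := (pow_zero _).symm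
        _ ≤ (1 + h * L) ^ (j + 1) := pow_le_pow_right₀ hbase (Nat.zero_le _)
      have hfin : (1 + h * L) * B + h * L
          ≤ (1 + h * L) ^ (j + 1) * (L + ((j:ℝ) + 1) * h * L) := by
        have e : (1 + h * L) * B = (1 + h * L) ^ (j + 1) * (L + (j:ℝ) * h * L) := by
          rw [hBdef]; ring
        have e2 : h * L ≤ (1 + h * L) ^ (j + 1) * (h * L) := by
          have := mul_le_mul_of_nonneg_right hp1 (mul_nonneg hh.le hL)
          linarith [this]
        have e3 : (1 + h * L) ^ (j + 1) * (L + ((j:ℝ) + 1) * h * L)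
            = (1 + h * L) ^ (j + 1) * (L + (j:ℝ) * h * L) + (1 + h * L) ^ (j + 1) * (h * L) := by
          ring
        linarith [e, e2, e3]
      calc |u (n - (j + 1)) ω| ≤ (1 + h * L) * B + h * L := hstep
      _ ≤ (1 + h * L) ^ (j + 1) * (L + ((j:ℝ) + 1) * h * L) := hfin
      _ = (1 + h * L) ^ (j + 1) * (L + ((j + 1 : ℕ):ℝ) * h * L) := by push_cast; ring
  -- conclude
  intro k hk ω
  have hmain := main (n - k) (Nat.sub_le n k) ω
  rw [Nat.sub_sub_self hk] at hmain
  have hnh : (n:ℝ) * h = T := by rw [hhdef]; field_simp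
  have hjn : ((n - k : ℕ) : ℝ) ≤ (n : ℝ) := by exact_mod_cast Nat.sub_le n k
  have mono1 : (1 + h * L) ^ (n - k) ≤ (1 + h * L) ^ n :=
    pow_le_pow_right₀ hbase (Nat.sub_le n k)
  have mono2 : L + ((n - k : ℕ):ℝ) * h * L ≤ L + T * L := by
    have : ((n - k : ℕ):ℝ) * h * L ≤ (n:ℝ) * h * L := by
      have h1 := mul_le_mul_of_nonneg_right hjn (mul_nonneg hh.le hL)
      have h2 : ((n - k : ℕ):ℝ) * (h * L) = ((n - k : ℕ):ℝ) * h * L := by ring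
      have h3 : (n:ℝ) * (h * L) = (n:ℝ) * h * L := by ring
      linarith
    rw [hnh] at this
    linarith
  have hnn1 : (0:ℝ) ≤ L + ((n - k : ℕ):ℝ) * h * L := by
    have := mul_nonneg (mul_nonneg (Nat.cast_nonneg (n - k) : (0:ℝ) ≤ (n - k : ℕ)) hh.le) hL
    linarith
  have expb : (1 + h * L) ^ n ≤ Real.exp (L * T) := by
    calc (1 + h * L) ^ n ≤ Real.exp (h * L) ^ n :=
      pow_le_pow_left₀ (by linarith [mul_nonneg hh.le hL]) (by linarith [Real.add_one_le_exp (h * L)]) n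
    _ = Real.exp ((n:ℝ) * (h * L)) := (Real.exp_nat_mul _ n).symm
    _ = Real.exp (L * T) := by rw [show (n:ℝ) * (h * L) = L * ((n:ℝ) * h) by ring, hnh]
  have hTL : (0:ℝ) ≤ L + T * L := by linarith [mul_nonneg hT.le hL]
  calc |u k ω| ≤ (1 + h * L) ^ (n - k) * (L + ((n - k : ℕ):ℝ) * h * L) := hmain
  _ ≤ (1 + h * L) ^ n * (L + T * L) :=
      mul_le_mul mono1 mono2 hnn1 (by positivity)
  _ ≤ Real.exp (L * T) * (L + T * L) := mul_le_mul_of_nonneg_right expb hTL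
  _ = Real.exp (L * T) * (L + L * T) := by ring
end
end

section
/- (Consistency of the explicit finite-difference scheme.) Let G : [0,T]×Ω×ℝ×ℝ×ℝ → ℝ be continuous with respect to the product of the Dupire pseudo-distance on [0,T]×Ω and the Euclidean metric on ℝ³, fix λ > 0, and let φ : [0,T]×ℝ → ℝ be continuous with continuous partial derivatives ∂_tφ, ∂_xφ, ∂²_{xx}φ. Fix (t,ω) ∈ [0,T)×Ω. For parameters t' ∈ [t,T), h ∈ (0, T−t'], ω' ∈ Ω and c ∈ ℝ, set Δx := λ√h, ω̃ := ω ⊗_t ω', x̃ := ω̃_{t'}, and define 𝕋(t',ω',h,c) := φ(t'+h, x̃) + c + h·G( t', ω̃, φ(t'+h,x̃) + c, [φ(t'+h, x̃+Δx) − φ(t'+h, x̃)]/Δx, [φ(t'+h, x̃+Δx) − 2φ(t'+h, x̃) + φ(t'+h, x̃−Δx)]/Δx² ). Then the difference quotient [ φ(t', x̃) + c − 𝕋(t',ω',h,c) ] / h converges to −∂_tφ(t, ω_t) − G( t, ω, φ(t, ω_t), ∂_xφ(t, ω_t), ∂²_{xx}φ(t, ω_t) ) as (t'−t) + ‖ω'‖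 + h + |c| → 0; precisely, for every ε' > 0 there exists δ > 0 such that the quotient differs from this limit by at most ε' whenever t' ∈ [t,T), h ∈ (0,T−t'], and (t'−t) + ‖ω'‖ + h + |c| ≤ δ. -/
noncomputable section

/-- The concatenated path `ω ⊗_t ω'`: equals `ω` on `[0,t]` and `ω_t + ω'_{s−t}` for `s > t`. -/
def concat1 (t : ℝ) (ht : 0 ≤ t) (ω ω' : Path1) : Path1 :=
  ⟨fun s => ω.1 (min s t) + ω'.1 (max (s - t) 0),
   ⟨(ω.2.1.comp (continuous_id.min continuous_const)).add
      (ω'.2.1.comp ((continuous_id.sub continuous_const).max continuous_const)),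
    by
      have h1 : max ((0 : ℝ) - t) 0 = 0 := max_eq_right (by linarith)
      have h2 : min (0 : ℝ) t = 0 := min_eq_left ht
      simp only [h2, h1, ω.2.2, ω'.2.2, add_zero]⟩⟩


/-- Pointwise ε-δ continuity at a point, for a continuous function on `ℝ × ℝ`. -/
lemma cont_pt {f : ℝ × ℝ → ℝ} (hf : Continuous f) (a b : ℝ) {ε : ℝ} (hε : 0 < ε) :
    ∃ δ > (0:ℝ), ∀ x y : ℝ, |x - a| < δ → |y - b| < δ → |f (x, y) - f (a, b)| < ε := by
  obtain ⟨δ, hδ, h⟩ := Metric.continuousAt_iff.mp (hf.continuousAt (x := (a, b))) ε hε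
  refine ⟨δ, hδ, fun x y hx hy => ?_⟩
  have hd : dist (x, y) ((a, b) : ℝ × ℝ) < δ := by
    rw [Prod.dist_eq]
    exact max_lt (by rwa [Real.dist_eq]) (by rwa [Real.dist_eq])
  have := h hd
  rwa [Real.dist_eq] at this

lemma supNorm_ge (T : ℝ) (f : ℝ → ℝ) (hf : Continuous f) {s : ℝ} (h0 : 0 ≤ s) (hsT : s ≤ T) :
    |f s| ≤ supNorm T f := by
  have hb : BddAbove (Set.range fun s : Set.Icc (0:ℝ) T => |f s.1|) := by
    have h2 := (isCompact_Icc (a := (0:ℝ)) (b := T)).bddAbove_image hf.abs.continuousOn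
    exact BddAbove.mono (by rintro y ⟨u, rfl⟩; exact ⟨u.1, u.2, rfl⟩) h2
  exact le_ciSup hb ⟨s, h0, hsT⟩

set_option maxHeartbeats 1000000 in
/-- consistency of the explicit finite-difference scheme: if `G` is
continuous for the Dupire pseudo-distance (in `(t,ω)`) and the Euclidean metric (in
`(y,z,γ)`), and `φ(t,x)` is `C^{1,2}`, then at every `(t,ω)` with `t < T` the
one-step difference quotient of the scheme applied to `φ + c` converges to
`−∂_tφ(t,ω_t) − G(t, ω, φ(t,ω_t), ∂_xφ(t,ω_t), ∂²_{xx}φ(t,ω_t))`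
as `(t'−t) + ‖ω'‖ + h + |c| → 0`. -/
theorem stmt_14 (T lam : ℝ) (hT : 0 < T) (hlam : 0 < lam)
    (G : ℝ → Path1 → ℝ → ℝ → ℝ → ℝ)
    -- continuity of `G` w.r.t. the Dupire pseudo-distance and the Euclidean metric:
    (hGcont : ∀ (t : ℝ) (ω : Path1) (y z γ : ℝ), 0 ≤ t → t ≤ T →
      ∀ ε > (0 : ℝ), ∃ δ > (0 : ℝ), ∀ (t' : ℝ) (ω' : Path1) (y' z' γ' : ℝ),
        0 ≤ t' → t' ≤ T →
        |t - t'| + (supNorm T fun s => ω.1 (min t s) - ω'.1 (min t' s))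
            + |y - y'| + |z - z'| + |γ - γ'| < δ →
        |G t ω y z γ - G t' ω' y' z' γ'| < ε)
    -- `φ` is `C^{1,2}`: continuous, with continuous partial derivatives `φt, φx, φxx`:
    (φ φt φx φxx : ℝ → ℝ → ℝ)
    (hφc : Continuous fun p : ℝ × ℝ => φ p.1 p.2)
    (hφt : ∀ t x, HasDerivAt (fun r => φ r x) (φt t x) t)
    (hφtc : Continuous fun p : ℝ × ℝ => φt p.1 p.2)
    (hφx : ∀ t x, HasDerivAt (fun r => φ t r) (φx t x) x)
    (hφxc : Continuous fun p : ℝ × ℝ => φx p.1 p.2)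
    (hφxx : ∀ t x, HasDerivAt (fun r => φx t r) (φxx t x) x)
    (hφxxc : Continuous fun p : ℝ × ℝ => φxx p.1 p.2)
    (t : ℝ) (ω : Path1) (ht : 0 ≤ t) (htT : t < T) :
    ∀ ε' > (0 : ℝ), ∃ δ > (0 : ℝ),
      ∀ (t' h c : ℝ) (ω' : Path1),
        t ≤ t' → t' < T → 0 < h → h ≤ T - t' →
        (t' - t) + supNorm T ω'.1 + h + |c| ≤ δ →
        -- with `ω̃ = ω ⊗_t ω'`, `x̃ = ω̃_{t'}`, `Δx = lam √h`:
        ∀ xt dx : ℝ, xt = (concat1 t ht ω ω').1 t' → dx = lam * Real.sqrt h →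
        |(φ t' xt + c
            - (φ (t' + h) xt + c
               + h * G t' (concat1 t ht ω ω') (φ (t' + h) xt + c)
                   ((φ (t' + h) (xt + dx) - φ (t' + h) xt) / dx)
                   ((φ (t' + h) (xt + dx) - 2 * φ (t' + h) xt + φ (t' + h) (xt - dx))
                     / dx ^ 2))) / h
          - (-(φt t (ω.1 t))
             - G t ω (φ t (ω.1 t)) (φx t (ω.1 t)) (φxx t (ω.1 t)))| ≤ ε' := by
  intro ε' hε'
  set y0 := φ t (ω.1 t) with hy0
  set z0 := φx t (ω.1 t) with hz0
  set γ0 := φxx t (ω.1 t) with hγ0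
  obtain ⟨δG, hδG, hG⟩ := hGcont t ω y0 z0 γ0 ht htT.le (ε'/2) (by linarith)
  obtain ⟨δ1, hδ1, h1⟩ := cont_pt hφtc t (ω.1 t) (by linarith : (0:ℝ) < ε'/2)
  obtain ⟨δ2, hδ2, h2⟩ := cont_pt hφc t (ω.1 t) (by linarith : (0:ℝ) < δG/8)
  obtain ⟨δ3, hδ3, h3⟩ := cont_pt hφxc t (ω.1 t) (by linarith : (0:ℝ) < δG/8)
  obtain ⟨δ4, hδ4, h4⟩ := cont_pt hφxxc t (ω.1 t) (by linarith : (0:ℝ) < δG/8)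
  set δ0 := min (min δ1 δ2) (min δ3 δ4) with hδ0def
  have hδ0 : 0 < δ0 := lt_min (lt_min hδ1 hδ2) (lt_min hδ3 hδ4)
  have hδ01 : δ0 ≤ δ1 := le_trans (min_le_left _ _) (min_le_left _ _)
  have hδ02 : δ0 ≤ δ2 := le_trans (min_le_left _ _) (min_le_right _ _)
  have hδ03 : δ0 ≤ δ3 := le_trans (min_le_right _ _) (min_le_left _ _)
  have hδ04 : δ0 ≤ δ4 := le_trans (min_le_right _ _) (min_le_right _ _)
  set A := δ0 / (1 + 2 * lam) with hAdef
  have hA : 0 < A := div_pos hδ0 (by linarith)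
  have hAδ0 : (1 + 2 * lam) * A = δ0 := by rw [hAdef]; field_simp
  set δ := min (δG/8) (min (δ0/4) (min (A^2/2) 1)) with hδdef
  have hδpos : 0 < δ := by
    apply lt_min (by linarith)
    exact lt_min (by linarith) (lt_min (by positivity) one_pos)
  refine ⟨δ, hδpos, ?_⟩
  intro t' h c ω' htt' ht'T hh hhT hsum xt dx hxt hdx
  have hδG8 : δ ≤ δG/8 := min_le_left _ _
  have hδ04' : δ ≤ δ0/4 := le_trans (min_le_right _ _) (min_le_left _ _)
  have hδA2 : δ ≤ A^2/2 :=
    le_trans (min_le_right _ _) (le_trans (min_le_right _ _) (min_le_left _ _))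
  have hδ1' : δ ≤ 1 :=
    le_trans (min_le_right _ _) (le_trans (min_le_right _ _) (min_le_right _ _))
  set S := supNorm T ω'.1 with hSdef
  have hS0 : 0 ≤ S := by
    have h0 := supNorm_ge T ω'.1 ω'.2.1 (le_refl (0:ℝ)) hT.le
    rw [ω'.2.2, abs_zero] at h0
    exact h0
  have hcabs : 0 ≤ |c| := abs_nonneg c
  have hbt : t' - t ≤ δ := by linarith
  have hbS : S ≤ δ := by linarith
  have hbh : h ≤ δ := by linarith
  have hbc : |c| ≤ δ := by linarith
  -- √δ facts
  have hsqδA : Real.sqrt δ < A := by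
    have h1' : δ < A^2 := by nlinarith
    have := Real.sqrt_lt_sqrt hδpos.le h1'
    rwa [Real.sqrt_sq hA.le] at this
  have hsq1 : Real.sqrt δ ≤ 1 := by
    rw [show (1:ℝ) = Real.sqrt 1 by simp]
    exact Real.sqrt_le_sqrt hδ1'
  have hδsq : δ ≤ Real.sqrt δ := by
    calc δ = Real.sqrt δ * Real.sqrt δ := (Real.mul_self_sqrt hδpos.le).symm
      _ ≤ Real.sqrt δ * 1 := mul_le_mul_of_nonneg_left hsq1 (Real.sqrt_nonneg δ)
      _ = Real.sqrt δ := mul_one _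
  have hdxpos : 0 < dx := by
    rw [hdx]; exact mul_pos hlam (Real.sqrt_pos.mpr hh)
  have hdxle : dx ≤ lam * Real.sqrt δ := by
    rw [hdx]
    exact mul_le_mul_of_nonneg_left (Real.sqrt_le_sqrt hbh) hlam.le
  have hdxS : dx + S < δ0 := by
    have : (1 + lam) * Real.sqrt δ < (1 + 2 * lam) * A := by
      nlinarith [Real.sqrt_nonneg δ]
    nlinarith [Real.sqrt_nonneg δ]
  -- basic time bounds
  have ht'0 : 0 ≤ t' := le_trans ht htt'
  have hT0T : t' + h ≤ T := by linarith
  -- xt value and bound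
  have hxtv : xt = ω.1 t + ω'.1 (t' - t) := by
    rw [hxt]
    show ω.1 (min t' t) + ω'.1 (max (t' - t) 0) = _
    rw [min_eq_right htt', max_eq_left (by linarith)]
  have hxtb : |xt - ω.1 t| ≤ S := by
    have he : xt - ω.1 t = ω'.1 (t' - t) := by rw [hxtv]; ring
    rw [he]
    exact supNorm_ge T ω'.1 ω'.2.1 (by linarith) (by linarith)
  -- Dupire distance bound for the concatenated path
  haveI : Nonempty (Set.Icc (0:ℝ) T) := ⟨⟨0, le_refl _, hT.le⟩⟩
  have hsup : supNorm T (fun s => ω.1 (min t s) - (concat1 t ht ω ω').1 (min t' s)) ≤ S := by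
    refine ciSup_le ?_
    rintro ⟨s, hs0, hsT⟩
    show |ω.1 (min t s) - (concat1 t ht ω ω').1 (min t' s)| ≤ S
    have hconc : (concat1 t ht ω ω').1 (min t' s)
        = ω.1 (min t s) + ω'.1 (max (min t' s - t) 0) := by
      show ω.1 (min (min t' s) t) + ω'.1 (max (min t' s - t) 0) = _
      rw [min_assoc, min_eq_right (le_trans (min_le_right s t) htt'), min_comm]
    rw [hconc]
    have he : ω.1 (min t s) - (ω.1 (min t s) + ω'.1 (max (min t' s - t) 0))
        = -(ω'.1 (max (min t' s - t) 0)) := by ring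
    rw [he, abs_neg]
    refine supNorm_ge T ω'.1 ω'.2.1 (le_max_right _ _) ?_
    have hm : min t' s - t ≤ T := by
      have := min_le_left t' s
      linarith
    exact max_le hm hT.le
  -- MVT in time
  obtain ⟨ξ, hξm, hξ⟩ := exists_hasDerivAt_eq_slope (fun r => φ r xt) (fun r => φt r xt)
    (by linarith : t' < t' + h)
    ((hφc.comp (continuous_id.prodMk continuous_const)).continuousOn)
    (fun x _ => hφt x xt)
  rw [eq_div_iff (by linarith : t' + h - t' ≠ 0)] at hξ
  -- MVT in space (first derivative)
  obtain ⟨ξ₁, hξ₁m, hξ₁⟩ := exists_hasDerivAt_eq_slope (fun r => φ (t'+h) r)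
    (fun r => φx (t'+h) r) (by linarith : xt < xt + dx)
    ((hφc.comp (continuous_const.prodMk continuous_id)).continuousOn)
    (fun x _ => hφx (t'+h) x)
  rw [eq_div_iff (by linarith : xt + dx - xt ≠ 0)] at hξ₁
  have hZ : (φ (t'+h) (xt + dx) - φ (t'+h) xt) / dx = φx (t'+h) ξ₁ := by
    rw [div_eq_iff (ne_of_gt hdxpos)]
    linear_combination -hξ₁
  -- MVT twice for the second difference
  obtain ⟨η, hηm, hη⟩ := exists_hasDerivAt_eq_slope
    (fun u => φ (t'+h) (u + dx) - φ (t'+h) u)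
    (fun u => φx (t'+h) (u + dx) - φx (t'+h) u)
    (by linarith : xt - dx < xt)
    (((hφc.comp (continuous_const.prodMk (continuous_id.add continuous_const))).sub
      (hφc.comp (continuous_const.prodMk continuous_id))).continuousOn)
    (by
      intro u _
      have hd1 : HasDerivAt (fun u => φ (t'+h) (u + dx)) (φx (t'+h) (u + dx)) u := by
        have := (hφx (t'+h) (u + dx)).comp u ((hasDerivAt_id u).add_const dx)
        rw [mul_one] at this; exact this
      exact hd1.sub (hφx (t'+h) u))
  rw [eq_div_iff (by linarith : xt - (xt - dx) ≠ 0)] at hη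
  obtain ⟨ξ₂, hξ₂m, hξ₂⟩ := exists_hasDerivAt_eq_slope (fun r => φx (t'+h) r)
    (fun r => φxx (t'+h) r) (by linarith : η < η + dx)
    ((hφxc.comp (continuous_const.prodMk continuous_id)).continuousOn)
    (fun x _ => hφxx (t'+h) x)
  rw [eq_div_iff (by linarith : η + dx - η ≠ 0)] at hξ₂
  have hΓ : (φ (t'+h) (xt + dx) - 2 * φ (t'+h) xt + φ (t'+h) (xt - dx)) / dx ^ 2
      = φxx (t'+h) ξ₂ := by
    rw [div_eq_iff (pow_ne_zero 2 (ne_of_gt hdxpos))]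
    have hc2 : xt - dx + dx = xt := by ring
    rw [hc2] at hη
    linear_combination -hη - dx * hξ₂
  -- continuity estimates
  have hξt : |ξ - t| < δ1 := by
    rw [abs_of_nonneg (by linarith [hξm.1] : (0:ℝ) ≤ ξ - t)]
    have := hξm.2
    linarith
  have hxtδ1 : |xt - ω.1 t| < δ1 := by linarith
  have hφtb : |φt ξ xt - φt t (ω.1 t)| < ε'/2 := h1 ξ xt hξt hxtδ1
  have hTt : |t' + h - t| < δ0 := by
    rw [abs_of_nonneg (by linarith : (0:ℝ) ≤ t' + h - t)]
    linarith
  have hxtδ0 : |xt - ω.1 t| < δ0 := by linarith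
  have hφb : |φ (t'+h) xt - φ t (ω.1 t)| < δG/8 :=
    h2 (t'+h) xt (by linarith) (by linarith)
  have hξ₁b : |ξ₁ - ω.1 t| < δ0 := by
    have ht1 : |ξ₁ - xt| < dx := by
      rw [abs_of_pos (by linarith [hξ₁m.1] : (0:ℝ) < ξ₁ - xt)]
      linarith [hξ₁m.2]
    calc |ξ₁ - ω.1 t| ≤ |ξ₁ - xt| + |xt - ω.1 t| := abs_sub_le _ _ _
      _ < dx + S := by linarith
      _ < δ0 := hdxS
  have hφxb : |φx (t'+h) ξ₁ - φx t (ω.1 t)| < δG/8 :=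
    h3 (t'+h) ξ₁ (by linarith) (by linarith)
  have hξ₂b : |ξ₂ - ω.1 t| < δ0 := by
    have ht2 : |ξ₂ - xt| < dx := by
      rw [abs_lt]
      constructor
      · linarith [hξ₂m.1, hηm.1]
      · linarith [hξ₂m.2, hηm.2]
    calc |ξ₂ - ω.1 t| ≤ |ξ₂ - xt| + |xt - ω.1 t| := abs_sub_le _ _ _
      _ < dx + S := by linarith
      _ < δ0 := hdxS
  have hφxxb : |φxx (t'+h) ξ₂ - φxx t (ω.1 t)| < δG/8 :=
    h4 (t'+h) ξ₂ (by linarith) (by linarith)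
  -- G estimate
  have hyb : |y0 - (φ (t' + h) xt + c)| < δG/4 := by
    have he : y0 - (φ (t' + h) xt + c) = (φ t (ω.1 t) - φ (t'+h) xt) + (-c) := by
      rw [hy0]; ring
    have h' : |φ t (ω.1 t) - φ (t'+h) xt| < δG/8 := by
      rw [abs_sub_comm]; exact hφb
    calc |y0 - (φ (t' + h) xt + c)| ≤ |φ t (ω.1 t) - φ (t'+h) xt| + |(-c)| := by
          rw [he]; exact abs_add_le _ _
      _ < δG/8 + δG/8 := by rw [abs_neg]; linarith
      _ = δG/4 := by ring
  have hzb : |z0 - (φ (t' + h) (xt + dx) - φ (t' + h) xt) / dx| < δG/8 := by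
    rw [hZ, abs_sub_comm]
    exact hφxb
  have hγb : |γ0 - (φ (t' + h) (xt + dx) - 2 * φ (t' + h) xt + φ (t' + h) (xt - dx)) / dx ^ 2|
      < δG/8 := by
    rw [hΓ, abs_sub_comm]
    exact hφxxb
  have htt'b : |t - t'| ≤ δ := by
    rw [abs_sub_comm, abs_of_nonneg (by linarith : (0:ℝ) ≤ t' - t)]
    exact hbt
  have hGb : |G t ω y0 z0 γ0 - G t' (concat1 t ht ω ω') (φ (t' + h) xt + c)
      ((φ (t' + h) (xt + dx) - φ (t' + h) xt) / dx)
      ((φ (t' + h) (xt + dx) - 2 * φ (t' + h) xt + φ (t' + h) (xt - dx)) / dx ^ 2)| < ε'/2 := by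
    refine hG t' (concat1 t ht ω ω') _ _ _ ht'0 ht'T.le ?_
    linarith [hsup]
  -- the key algebraic identity
  have hnum : φ t' xt + c - (φ (t' + h) xt + c
      + h * G t' (concat1 t ht ω ω') (φ (t' + h) xt + c)
        ((φ (t' + h) (xt + dx) - φ (t' + h) xt) / dx)
        ((φ (t' + h) (xt + dx) - 2 * φ (t' + h) xt + φ (t' + h) (xt - dx)) / dx ^ 2))
      = h * (-(φt ξ xt) - G t' (concat1 t ht ω ω') (φ (t' + h) xt + c)
        ((φ (t' + h) (xt + dx) - φ (t' + h) xt) / dx)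
        ((φ (t' + h) (xt + dx) - 2 * φ (t' + h) xt + φ (t' + h) (xt - dx)) / dx ^ 2)) := by
    linear_combination hξ
  have hq : (φ t' xt + c - (φ (t' + h) xt + c
      + h * G t' (concat1 t ht ω ω') (φ (t' + h) xt + c)
        ((φ (t' + h) (xt + dx) - φ (t' + h) xt) / dx)
        ((φ (t' + h) (xt + dx) - 2 * φ (t' + h) xt + φ (t' + h) (xt - dx)) / dx ^ 2))) / h
      = -(φt ξ xt) - G t' (concat1 t ht ω ω') (φ (t' + h) xt + c)
        ((φ (t' + h) (xt + dx) - φ (t' + h) xt) / dx)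
        ((φ (t' + h) (xt + dx) - 2 * φ (t' + h) xt + φ (t' + h) (xt - dx)) / dx ^ 2) := by
    rw [hnum, mul_div_cancel_left₀ _ (ne_of_gt hh)]
  calc |(φ t' xt + c - (φ (t' + h) xt + c
        + h * G t' (concat1 t ht ω ω') (φ (t' + h) xt + c)
          ((φ (t' + h) (xt + dx) - φ (t' + h) xt) / dx)
          ((φ (t' + h) (xt + dx) - 2 * φ (t' + h) xt + φ (t' + h) (xt - dx)) / dx ^ 2))) / h
        - (-(φt t (ω.1 t)) - G t ω y0 z0 γ0)|
      = |(φt t (ω.1 t) - φt ξ xt)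
        + (G t ω y0 z0 γ0 - G t' (concat1 t ht ω ω') (φ (t' + h) xt + c)
          ((φ (t' + h) (xt + dx) - φ (t' + h) xt) / dx)
          ((φ (t' + h) (xt + dx) - 2 * φ (t' + h) xt + φ (t' + h) (xt - dx)) / dx ^ 2))| := by
        rw [hq]; ring_nf
    _ ≤ |φt t (ω.1 t) - φt ξ xt|
        + |G t ω y0 z0 γ0 - G t' (concat1 t ht ω ω') (φ (t' + h) xt + c)
          ((φ (t' + h) (xt + dx) - φ (t' + h) xt) / dx)
          ((φ (t' + h) (xt + dx) - 2 * φ (t' + h) xt + φ (t' + h) (xt - dx)) / dx ^ 2)| :=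
        abs_add_le _ _
    _ ≤ ε' := by
        rw [abs_sub_comm (φt t (ω.1 t))]
        linarith
end
end

section
/- (Monotonicity of the explicit finite-difference operator.) In the finite-difference setting, there exists h₀ > 0 depending only on L, λ and ε such that for every h ∈ (0, h₀] with h ≤ T, every t ∈ [0, T−h], every ω ∈ Ω, and all bounded functions χ, χ' : Ω → ℝ with χ ≥ χ' pointwise on Ω, one has 𝕋^{t,ω}_h[χ] ≥ 𝕋^{t,ω}_h[χ']. -/
noncomputable section

/-- Mean value theorem, equation form, for any two points. -/
lemma mvt_aux_s15 (g g' : ℝ → ℝ) (hg : ∀ x, HasDerivAt g (g' x) x) (p q : ℝ) :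
    ∃ ξ, g q - g p = g' ξ * (q - p) := by
  rcases lt_trichotomy p q with hpq | rfl | hqp
  · obtain ⟨c, _, hc⟩ := exists_hasDerivAt_eq_slope g g' hpq
      (fun x _ => (hg x).continuousAt.continuousWithinAt) (fun x _ => hg x)
    refine ⟨c, ?_⟩
    rw [hc, div_mul_eq_mul_div, mul_div_assoc, div_self (sub_ne_zero.mpr hpq.ne'), mul_one]
  · exact ⟨p, by ring⟩
  · obtain ⟨c, _, hc⟩ := exists_hasDerivAt_eq_slope g g' hqp
      (fun x _ => (hg x).continuousAt.continuousWithinAt) (fun x _ => hg x)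
    refine ⟨c, ?_⟩
    have hne : p - q ≠ 0 := sub_ne_zero.mpr hqp.ne'
    field_simp at hc
    linarith [hc]


set_option maxHeartbeats 1000000 in
/-- The purely arithmetic core of the monotonicity estimate. -/
lemma arith_aux (L lam eps h s K p q r A B C : ℝ) (hL : 0 ≤ L) (hlam : 0 < lam)
    (heps0 : 0 < eps) (heps2 : eps < 1 / 2) (hh : 0 < h) (hs0 : 0 < s) (hs2 : s ^ 2 = h)
    (hs1 : s ≤ 1) (hKdef : K = (L + 1) * (lam + 1 + 1 / lam)) (hsK' : s * K ≤ eps)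
    (hpb : -L ≤ p ∧ p ≤ L) (hqb : -L ≤ q ∧ q ≤ L)
    (hrb : eps ≤ r ∧ r ≤ (1 / 2 - eps) * lam ^ 2)
    (hA0 : 0 ≤ A) (hB0 : 0 ≤ B) (hC0 : 0 ≤ C) :
    0 ≤ B + h * (p * B + q * ((A - B) / (lam * s))
      + r * ((A - 2 * B + C) / (lam * s) ^ 2)) := by
  have hhs : h ≤ s := by nlinarith
  have h1l : (0:ℝ) < 1 / lam := by positivity
  have hKL : L * lam ≤ K := by
    rw [hKdef]; nlinarith [mul_nonneg hL h1l.le]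
  have hLs : L * lam * s ≤ eps := by
    nlinarith [mul_le_mul_of_nonneg_left hKL hs0.le]
  have hcoefA : 0 ≤ s * q / lam + r / lam ^ 2 := by
    have key : 0 ≤ s * q * lam + r := by
      nlinarith [mul_nonneg (mul_nonneg hs0.le hlam.le)
        (by linarith [hqb.1] : (0:ℝ) ≤ q + L), hrb.1]
    have e : s * q / lam + r / lam ^ 2 = (s * q * lam + r) / lam ^ 2 := by
      field_simp
    rw [e]
    exact div_nonneg key (sq_nonneg lam)
  have hcoefC : 0 ≤ r / lam ^ 2 := div_nonneg (heps0.le.trans hrb.1) (sq_nonneg lam)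
  have hcoefB : 0 ≤ 1 + h * p - s * q / lam - 2 * r / lam ^ 2 := by
    have e1 := mul_le_mul_of_nonneg_right hsK' hlam.le
    have e2 : s * (L + 1) * (lam ^ 2 + lam + 1) ≤ eps * lam := by
      calc s * (L + 1) * (lam ^ 2 + lam + 1) = s * K * lam := by
            rw [hKdef]; field_simp
        _ ≤ eps * lam := e1
    have e3 : L * (lam + 1) ≤ 2 * ((L + 1) * (lam ^ 2 + lam + 1)) := by nlinarith
    have hKs2 : s * (L * (lam + 1)) ≤ 2 * eps * lam := by
      calc s * (L * (lam + 1)) ≤ s * (2 * ((L + 1) * (lam ^ 2 + lam + 1))) :=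
            mul_le_mul_of_nonneg_left e3 hs0.le
        _ = 2 * (s * (L + 1) * (lam ^ 2 + lam + 1)) := by ring
        _ ≤ 2 * (eps * lam) := by linarith
        _ = 2 * eps * lam := by ring
    have key2 : 0 ≤ lam ^ 2 + h * p * lam ^ 2 - s * q * lam - 2 * r := by
      nlinarith [mul_nonneg (mul_nonneg hh.le (sq_nonneg lam))
          (by linarith [hpb.1] : (0:ℝ) ≤ p + L),
        mul_nonneg (mul_nonneg hs0.le hlam.le) (by linarith [hqb.2] : (0:ℝ) ≤ L - q),
        mul_nonneg (by linarith : (0:ℝ) ≤ s - h) (mul_nonneg hL (sq_nonneg lam)),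
        mul_le_mul_of_nonneg_left hKs2 hlam.le, hrb.2]
    have e : 1 + h * p - s * q / lam - 2 * r / lam ^ 2 =
        (lam ^ 2 + h * p * lam ^ 2 - s * q * lam - 2 * r) / lam ^ 2 := by
      field_simp
    rw [e]
    exact div_nonneg key2 (sq_nonneg lam)
  have hid : B + h * (p * B + q * ((A - B) / (lam * s))
      + r * ((A - 2 * B + C) / (lam * s) ^ 2)) =
      A * (s * q / lam + r / lam ^ 2)
        + B * (1 + h * p - s * q / lam - 2 * r / lam ^ 2)
        + C * (r / lam ^ 2) := by
    rw [← hs2]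
    field_simp
    ring
  rw [hid]
  have := add_nonneg (add_nonneg (mul_nonneg hA0 hcoefA) (mul_nonneg hB0 hcoefB))
    (mul_nonneg hC0 hcoefC)
  linarith

/-- monotonicity of the one-step explicit finite-difference operator
`𝕋^{t,ω}_h[χ] = χ(ω_{t∧·}) + h G(t,ω,𝒟⁰χ,𝒟¹χ,𝒟²χ)` (with `Δx = lam √h`): under the
CFL condition there is `h₀ > 0`, depending only on `L, lam, eps`, such that for all
`h ∈ (0,h₀]` with `h ≤ T`, all `t ∈ [0,T−h]`, all `ω`, and all bounded `χ ≥ χ'`,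
one has `𝕋^{t,ω}_h[χ] ≥ 𝕋^{t,ω}_h[χ']`. -/
theorem stmt_15 (T L lam eps : ℝ) (hT : 0 < T) (hL : 0 ≤ L) (hlam : 0 < lam)
    (heps : eps ∈ Set.Ioo (0 : ℝ) (1 / 2))
    (G Gy Gz Gg : ℝ → Path1 → ℝ → ℝ → ℝ → ℝ)
    -- `G` is continuously differentiable in `(y,z,γ)` with partial derivatives `Gy, Gz, Gg`:
    (hdy : ∀ t ω y z γ, HasDerivAt (fun r => G t ω r z γ) (Gy t ω y z γ) y)
    (hdz : ∀ t ω y z γ, HasDerivAt (fun r => G t ω y r γ) (Gz t ω y z γ) z)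
    (hdg : ∀ t ω y z γ, HasDerivAt (fun r => G t ω y z r) (Gg t ω y z γ) γ)
    (hdcont : ∀ t ω, Continuous fun p : ℝ × ℝ × ℝ =>
      (Gy t ω p.1 p.2.1 p.2.2, Gz t ω p.1 p.2.1 p.2.2, Gg t ω p.1 p.2.1 p.2.2))
    -- bounds on the partial derivatives, including the CFL condition:
    (hGyb : ∀ t ω y z γ, |Gy t ω y z γ| ≤ L)
    (hGzb : ∀ t ω y z γ, |Gz t ω y z γ| ≤ L)
    (hGgb : ∀ t ω y z γ, eps ≤ Gg t ω y z γ ∧ Gg t ω y z γ ≤ (1 / 2 - eps) * lam ^ 2) :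
    ∃ h₀ > (0 : ℝ),
      ∀ hstep : ℝ, ∀ hh : 0 < hstep, hstep ≤ h₀ → hstep ≤ T →
      ∀ t : ℝ, ∀ ht : 0 ≤ t, t ≤ T - hstep →
      ∀ ω : Path1, ∀ χ χ' : Path1 → ℝ,
        (∃ M, ∀ x, |χ x| ≤ M) → (∃ M, ∀ x, |χ' x| ≤ M) →
        (∀ ω'' : Path1, χ' ω'' ≤ χ ω'') →
        χ' (stopPath ω t ht)
            + hstep * G t ω (D0 χ' t ht ω)
                (D1 χ' t hstep (lam * Real.sqrt hstep) ht hh ω)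
                (D2 χ' t hstep (lam * Real.sqrt hstep) ht hh ω)
          ≤ χ (stopPath ω t ht)
            + hstep * G t ω (D0 χ t ht ω)
                (D1 χ t hstep (lam * Real.sqrt hstep) ht hh ω)
                (D2 χ t hstep (lam * Real.sqrt hstep) ht hh ω) := by
  have heps0 : 0 < eps := heps.1
  have heps2 : eps < 1 / 2 := heps.2
  set K : ℝ := (L + 1) * (lam + 1 + 1 / lam) with hKdef
  have hKpos : 0 < K := by positivity
  refine ⟨min 1 ((eps / K) ^ 2), by positivity, ?_⟩
  intro h hh hh0 hhT t ht htT ω χ χ' _ _ hle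
  set s := Real.sqrt h with hsdef
  have hs0 : 0 < s := Real.sqrt_pos.mpr hh
  have hs2 : s ^ 2 = h := Real.sq_sqrt hh.le
  have hh1 : h ≤ 1 := hh0.trans (min_le_left _ _)
  have hs1 : s ≤ 1 := by rw [hsdef]; exact Real.sqrt_le_one.mpr hh1
  have hsK : s ≤ eps / K := by
    have h2 : h ≤ (eps / K) ^ 2 := hh0.trans (min_le_right _ _)
    have := Real.sqrt_le_sqrt h2
    rwa [Real.sqrt_sq (by positivity)] at this
  have hsK' : s * K ≤ eps := (le_div_iff₀ hKpos).mp hsK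
  set dx := lam * s with hdxdef
  have hdx : 0 < dx := by positivity
  set a := χ (bumpPath ω t h dx ht hh) with ha
  set b := χ (stopPath ω t ht) with hb
  set c := χ (bumpPath ω t h (-dx) ht hh) with hc
  set a' := χ' (bumpPath ω t h dx ht hh) with ha'
  set b' := χ' (stopPath ω t ht) with hb'
  set c' := χ' (bumpPath ω t h (-dx) ht hh) with hc'
  have hA : a' ≤ a := hle _
  have hB : b' ≤ b := hle _
  have hC : c' ≤ c := hle _
  set z := (a - b) / dx with hz
  set z' := (a' - b') / dx with hz'
  set γ := (a - 2 * b + c) / dx ^ 2 with hγ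
  set γ' := (a' - 2 * b' + c') / dx ^ 2 with hγ'
  have hD0 : D0 χ t ht ω = b := rfl
  have hD0' : D0 χ' t ht ω = b' := rfl
  have hD1 : D1 χ t h dx ht hh ω = z := rfl
  have hD1' : D1 χ' t h dx ht hh ω = z' := rfl
  have hD2 : D2 χ t h dx ht hh ω = γ := rfl
  have hD2' : D2 χ' t h dx ht hh ω = γ' := rfl
  rw [hD0, hD0', hD1, hD1', hD2, hD2']
  -- mean value theorem in each of the three variables
  obtain ⟨ξ1, h1⟩ := mvt_aux_s15 (fun r => G t ω r z γ) (fun r => Gy t ω r z γ)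
    (fun x => hdy t ω x z γ) b' b
  obtain ⟨ξ2, h2⟩ := mvt_aux_s15 (fun r => G t ω b' r γ) (fun r => Gz t ω b' r γ)
    (fun x => hdz t ω b' x γ) z' z
  obtain ⟨ξ3, h3⟩ := mvt_aux_s15 (fun r => G t ω b' z' r) (fun r => Gg t ω b' z' r)
    (fun x => hdg t ω b' z' x) γ' γ
  set p := Gy t ω ξ1 z γ with hp
  set q := Gz t ω b' ξ2 γ with hq
  set r := Gg t ω b' z' ξ3 with hr
  have hpb : |p| ≤ L := hGyb t ω ξ1 z γ
  have hqb : |q| ≤ L := hGzb t ω b' ξ2 γ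
  have hrb : eps ≤ r ∧ r ≤ (1 / 2 - eps) * lam ^ 2 := hGgb t ω b' z' ξ3
  rw [abs_le] at hpb hqb
  -- difference of the G values
  have hG : G t ω b z γ - G t ω b' z' γ' =
      p * (b - b') + q * (z - z') + r * (γ - γ') := by
    have e : G t ω b z γ - G t ω b' z' γ' =
        (G t ω b z γ - G t ω b' z γ) + (G t ω b' z γ - G t ω b' z' γ)
          + (G t ω b' z' γ - G t ω b' z' γ') := by ring
    rw [e, h1, h2, h3]
  have hzz : z - z' = ((a - a') - (b - b')) / dx := by
    rw [hz, hz', div_sub_div_same]; ring_nf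
  have hγγ : γ - γ' = ((a - a') - 2 * (b - b') + (c - c')) / dx ^ 2 := by
    rw [hγ, hγ', div_sub_div_same]; ring_nf
  have key := arith_aux L lam eps h s K p q r (a - a') (b - b') (c - c') hL hlam
    heps0 heps2 hh hs0 hs2 hs1 hKdef hsK' hpb hqb hrb
    (by linarith) (by linarith) (by linarith)
  rw [← hdxdef] at key
  have e : b + h * G t ω b z γ - (b' + h * G t ω b' z' γ') =
      (b - b') + h * (p * (b - b') + q * (((a - a') - (b - b')) / dx)
        + r * (((a - a') - 2 * (b - b') + (c - c')) / dx ^ 2)) := by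
    rw [← hzz, ← hγγ]
    linear_combination h * hG
  linarith [key, e]
end
end
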